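/- arXiv:1908.10143 — 3 statements merged into one kernel-verified Lean document; each statement's English description precedes it below -/
import Mathlib

section
/- For every ε > 0 there exists a constant C(ε) > 0 such that for every odd prime q, every integer W with 1 ≤ W ≤ q, and all integers a and h with gcd(ah, q) = 1, one has | Σ_{w=1}^{W} Σ_{x ∈ F_q, x² = aw (mod q)} e_q(hx) | ≤ C(ε) q^{1/2+ε}. -/
/-- The additive character `e_q(x) = exp(2πi x/q)`, evaluated on a residue class. -/
noncomputable def eZ (q : ℕ) (x : ZMod q) : ℂ :=
  Complex.exp (2 * (Real.pi : ℂ) * Complex.I * (x.val : ℂ) / (q : ℂ))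

/-- The complete sum `Σ_{x ∈ F_q, x² = a w} e_q(h x)` over modular square roots. -/
noncomputable def sqrtSum (q : ℕ) [NeZero q] (a h : ℤ) (w : ℕ) : ℂ :=
  ∑ x : ZMod q,
    if x ^ 2 = (a : ZMod q) * (w : ZMod q) then eZ q ((h : ZMod q) * x) else 0

open Finset ZMod AddChar

section Aux

variable {q : ℕ} [hq : Fact q.Prime]

lemma eZ_eq {q : ℕ} [NeZero q] (x : ZMod q) : eZ q x = ZMod.stdAddChar x := by
  rw [eZ, ZMod.stdAddChar_apply, ZMod.toCircle_apply]

lemma norm_std {q : ℕ} [NeZero q] (x : ZMod q) : ‖ZMod.stdAddChar x‖ = 1 := by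
  rw [ZMod.stdAddChar_apply, Circle.norm_coe]

lemma std_eq_one_iff {q : ℕ} [NeZero q] (x : ZMod q) : ZMod.stdAddChar x = 1 ↔ x = 0 := by
  constructor
  · intro h
    have h1 : ZMod.toCircle x = 1 :=
      Subtype.coe_injective (by simpa [ZMod.stdAddChar_apply] using h)
    have h0 : ZMod.toCircle (0 : ZMod q) = 1 := by simp
    exact ZMod.injective_toCircle (h1.trans h0.symm)
  · rintro rfl; simp

noncomputable def qchar (q : ℕ) [Fact q.Prime] : MulChar (ZMod q) ℂ :=
  (quadraticChar (ZMod q)).ringHomComp (Int.castRingHom ℂ)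


lemma norm_gaussSum (hq2 : q ≠ 2) {ψ' : AddChar (ZMod q) ℂ} (h : ψ'.IsPrimitive) :
    ‖gaussSum (qchar q) ψ'‖ = Real.sqrt q := by
  have hchar : ringChar (ZMod q) ≠ 2 := by
    rw [ZMod.ringChar_zmod_n]; exact hq2
  have hne : qchar q ≠ 1 :=
    (MulChar.ringHomComp_ne_one_iff (RingHom.injective_int _)).mpr (quadraticChar_ne_one hchar)
  have hquad : (qchar q).IsQuadratic := (quadraticChar_isQuadratic (ZMod q)).comp _
  have hsq := gaussSum_sq hne hquad h
  have hnorm1 : ‖(qchar q) (-1)‖ = 1 := by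
    rcases quadraticChar_dichotomy (a := (-1 : ZMod q)) (neg_ne_zero.mpr one_ne_zero) with h1 | h1 <;>
      simp [qchar, MulChar.ringHomComp_apply, h1]
  have key : ‖gaussSum (qchar q) ψ'‖ ^ 2 = (q : ℝ) := by
    rw [← norm_pow, hsq, norm_mul, hnorm1, one_mul, ZMod.card q, Complex.norm_natCast]
  rw [← Real.sqrt_sq (norm_nonneg _), key]

lemma sq_count_sum (hq2 : q ≠ 2) (f : ZMod q → ℂ) :
    ∑ y : ZMod q, f (y ^ 2) = ∑ u : ZMod q, (qchar q u + 1) * f u := by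
  have hchar : ringChar (ZMod q) ≠ 2 := by rw [ZMod.ringChar_zmod_n]; exact hq2
  classical
  rw [← Finset.sum_fiberwise_of_maps_to' (g := fun y : ZMod q => y ^ 2)
    (fun x _ => Finset.mem_univ _) f]
  refine Finset.sum_congr rfl fun u _ => ?_
  rw [Finset.sum_const, nsmul_eq_mul]
  congr 1
  have hcard := quadraticChar_card_sqrts hchar u
  rw [Set.toFinset_setOf] at hcard
  have : ((Finset.univ.filter (fun y : ZMod q => y ^ 2 = u)).card : ℤ)
      = quadraticChar (ZMod q) u + 1 := hcard
  calc ((Finset.univ.filter (fun y : ZMod q => y ^ 2 = u)).card : ℂ)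
      = (((Finset.univ.filter (fun y : ZMod q => y ^ 2 = u)).card : ℤ) : ℂ) := by push_cast; ring
    _ = qchar q u + 1 := by rw [this]; push_cast; simp [qchar, MulChar.ringHomComp_apply]

lemma norm_quadSum (hq2 : q ≠ 2) {b : ZMod q} (hb : b ≠ 0) (c : ZMod q) :
    ‖∑ x : ZMod q, ZMod.stdAddChar (b * x ^ 2 + c * x)‖ = Real.sqrt q := by
  have two_ne : (2 : ZMod q) ≠ 0 := by
    have : ((2 : ℕ) : ZMod q) ≠ 0 := by
      rw [Ne, ZMod.natCast_eq_zero_iff]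
      intro hdvd
      exact hq2 ((Nat.prime_dvd_prime_iff_eq hq.out Nat.prime_two).mp hdvd)
    simpa using this
  set d := c * (2 * b)⁻¹ with hd
  have h2bd : 2 * b * d = c := by
    rw [hd, mul_comm c, ← mul_assoc, mul_inv_cancel₀ (mul_ne_zero two_ne hb), one_mul]
  have key : ∀ x : ZMod q, b * x ^ 2 + c * x = b * (x + d) ^ 2 + -(b * d ^ 2) := by
    intro x; linear_combination (-x) * h2bd
  have reindex : ∑ x : ZMod q, ZMod.stdAddChar (b * x ^ 2 + c * x)
      = (∑ y : ZMod q, ZMod.stdAddChar (b * y ^ 2)) * ZMod.stdAddChar (-(b * d ^ 2)) := by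
    calc ∑ x : ZMod q, ZMod.stdAddChar (b * x ^ 2 + c * x)
        = ∑ x : ZMod q, ZMod.stdAddChar (b * (x + d) ^ 2) * ZMod.stdAddChar (-(b * d ^ 2)) := by
          refine Finset.sum_congr rfl fun x _ => ?_
          rw [key x, AddChar.map_add_eq_mul]
      _ = ∑ y : ZMod q, ZMod.stdAddChar (b * y ^ 2) * ZMod.stdAddChar (-(b * d ^ 2)) :=
          Fintype.sum_equiv (Equiv.addRight d) _ _ (fun x => rfl)
      _ = _ := by rw [← Finset.sum_mul]
  have hprim : (AddChar.mulShift (ZMod.stdAddChar (N := q)) b).IsPrimitive :=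
    AddChar.IsPrimitive.of_ne_one (ZMod.isPrimitive_stdAddChar q hb)
  have inner : ∑ y : ZMod q, ZMod.stdAddChar (b * y ^ 2)
      = gaussSum (qchar q) (AddChar.mulShift (ZMod.stdAddChar (N := q)) b) := by
    have := sq_count_sum hq2 (fun u => ZMod.stdAddChar (b * u))
    rw [this]
    have hz : ∑ u : ZMod q, ZMod.stdAddChar (b * u) = 0 := by
      have := AddChar.sum_mulShift (ψ := ZMod.stdAddChar (N := q)) b
        (ZMod.isPrimitive_stdAddChar q)
      calc ∑ u : ZMod q, ZMod.stdAddChar (b * u)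
          = ∑ u : ZMod q, ZMod.stdAddChar (u * b) := by
            refine Finset.sum_congr rfl fun u _ => by rw [mul_comm]
        _ = 0 := by simpa [hb] using this
    rw [Finset.sum_congr rfl (fun u _ => add_mul (qchar q u) 1 _), Finset.sum_add_distrib]
    simp only [one_mul, hz, add_zero]
    rfl
  rw [reindex, norm_mul, norm_std, mul_one, inner, norm_gaussSum hq2 hprim]

lemma norm_sub_one_ge {t : ZMod q} (ht : t ≠ 0) :
    4 * ((min t.val (q - t.val) : ℕ) : ℝ) / q ≤ ‖ZMod.stdAddChar t - 1‖ := by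
  have hq0 : 0 < (q : ℝ) := by exact_mod_cast (Nat.Prime.pos hq.out)
  set m := t.val with hm
  have hm1 : 1 ≤ m := Nat.one_le_iff_ne_zero.mpr (by simpa [hm, ZMod.val_eq_zero] using ht)
  have hmq : m < q := ZMod.val_lt t
  set θ : ℝ := 2 * Real.pi * m / q with hθ
  have hz : ZMod.stdAddChar t = Complex.exp ((θ : ℂ) * Complex.I) := by
    rw [ZMod.stdAddChar_apply, ZMod.toCircle_apply]
    congr 1
    push_cast [hθ]
    ring
  have e2 : Complex.sin ((θ/2 : ℝ) : ℂ) = Real.sin (θ/2) := (Complex.ofReal_sin _).symm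
  have h1 : Complex.exp (((θ/2 : ℝ) : ℂ) * Complex.I) * Complex.exp (((θ/2 : ℝ) : ℂ) * Complex.I)
      = Complex.exp ((θ : ℂ) * Complex.I) := by
    rw [← Complex.exp_add]; congr 1; push_cast; ring
  have h2 : Complex.exp (((θ/2 : ℝ) : ℂ) * Complex.I) * Complex.exp (-((θ/2 : ℝ) : ℂ) * Complex.I)
      = 1 := by
    rw [← Complex.exp_add, ← Complex.exp_zero]; congr 1; push_cast; ring
  have factor : Complex.exp ((θ : ℂ) * Complex.I) - 1
      = Complex.exp (((θ/2 : ℝ) : ℂ) * Complex.I) * (2 * Complex.I * Complex.sin ((θ/2 : ℝ) : ℂ)) := by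
    rw [Complex.sin]
    linear_combination (-1 : ℂ) * h1 + h2 +
      (Complex.exp (((θ/2 : ℝ) : ℂ) * Complex.I) ^ 2 -
        Complex.exp (((θ/2 : ℝ) : ℂ) * Complex.I) * Complex.exp (-((θ/2 : ℝ) : ℂ) * Complex.I)) *
      Complex.I_mul_I
  have hnorm : ‖ZMod.stdAddChar t - 1‖ = 2 * |Real.sin (θ/2)| := by
    rw [hz, factor, norm_mul, Complex.norm_exp_ofReal_mul_I, one_mul, e2]
    rw [norm_mul, norm_mul, Complex.norm_I, Complex.norm_real, Real.norm_eq_abs]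
    norm_num
  have hhalf : θ / 2 = Real.pi * (m / q) := by rw [hθ]; ring
  have hmin_le₁ : ((min m (q - m) : ℕ) : ℝ) ≤ m := by
    exact_mod_cast Nat.cast_le.mpr (min_le_left m (q - m))
  have hmin_le₂ : ((min m (q - m) : ℕ) : ℝ) ≤ (q : ℝ) - m := by
    have h := Nat.cast_le (α := ℝ).mpr (min_le_right m (q - m))
    rwa [Nat.cast_sub hmq.le] at h
  have hmR : (m : ℝ) ≤ q := by exact_mod_cast hmq.le
  have hsin : 2 * ((min m (q - m) : ℕ) : ℝ) / q ≤ Real.sin (θ/2) := by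
    rw [hhalf]
    rcases le_or_gt ((m : ℝ) / q) (1/2) with hu | hu
    · have hb := Real.mul_le_sin (x := Real.pi * ((m : ℝ) / q))
        (by positivity) (by nlinarith [Real.pi_pos])
      have heq : 2 / Real.pi * (Real.pi * ((m:ℝ) / q)) = 2 * (m:ℝ) / q := by
        field_simp
      rw [heq] at hb
      refine le_trans ?_ hb
      rw [div_le_div_iff₀ hq0 hq0]
      nlinarith
    · have hrw : Real.pi * ((m:ℝ) / q) = Real.pi - Real.pi * (((q:ℝ) - m) / q) := by
        field_simp; ring
      rw [hrw, Real.sin_pi_sub]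
      have hqm0 : (0:ℝ) ≤ ((q:ℝ) - m) / q := div_nonneg (by linarith) hq0.le
      have hb := Real.mul_le_sin (x := Real.pi * (((q:ℝ) - m) / q))
        (mul_nonneg Real.pi_pos.le hqm0) (by nlinarith [Real.pi_pos])
      have heq : 2 / Real.pi * (Real.pi * (((q:ℝ)-m) / q)) = 2 * ((q:ℝ)-m) / q := by
        field_simp
      rw [heq] at hb
      refine le_trans ?_ hb
      rw [div_le_div_iff₀ hq0 hq0]
      nlinarith
  have habs : Real.sin (θ/2) ≤ |Real.sin (θ/2)| := le_abs_self _
  rw [hnorm]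
  calc 4 * ((min m (q - m) : ℕ) : ℝ) / q = 2 * (2 * ((min m (q-m) : ℕ) : ℝ) / q) := by ring
    _ ≤ 2 * Real.sin (θ/2) := by linarith [hsin]
    _ ≤ 2 * |Real.sin (θ/2)| := by linarith [habs]

lemma norm_geom {t : ZMod q} (ht : t ≠ 0) (W : ℕ) :
    ‖∑ w ∈ Finset.Icc 1 W, ZMod.stdAddChar ((w : ZMod q) * t)‖
      ≤ (q : ℝ) / (2 * ((min t.val (q - t.val) : ℕ) : ℝ)) := by
  have hq0 : 0 < (q : ℝ) := by exact_mod_cast (Nat.Prime.pos hq.out)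
  set z : ℂ := ZMod.stdAddChar t with hzdef
  have hz1 : z ≠ 1 := fun h => ht ((std_eq_one_iff t).mp h)
  have hrw : ∀ w : ℕ, ZMod.stdAddChar ((w : ZMod q) * t) = z ^ w := by
    intro w
    rw [hzdef, ← AddChar.mulShift_apply (r := (w : ZMod q)), AddChar.mulShift_spec']
  have hv : t.val < q := ZMod.val_lt t
  have h1 : 1 ≤ t.val := Nat.one_le_iff_ne_zero.mpr (by simpa [ZMod.val_eq_zero] using ht)
  have hmin1 : 1 ≤ min t.val (q - t.val) := by omega
  have hminR : (1:ℝ) ≤ ((min t.val (q - t.val) : ℕ) : ℝ) := by exact_mod_cast hmin1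
  have hgeom : ∑ w ∈ Finset.Icc 1 W, z ^ w = (z ^ (W+1) - z ^ 1) / (z - 1) := by
    rw [← Finset.Ico_add_one_right_eq_Icc]
    exact geom_sum_Ico hz1 (by omega)
  have hnormz : ∀ n : ℕ, ‖z ^ n‖ = 1 := fun n => by
    rw [norm_pow, hzdef, norm_std, one_pow]
  have hub : ‖∑ w ∈ Finset.Icc 1 W, z ^ w‖ ≤ 2 / ‖z - 1‖ := by
    rw [hgeom, norm_div]
    gcongr
    calc ‖z ^ (W+1) - z ^ 1‖ ≤ ‖z ^ (W+1)‖ + ‖z ^ 1‖ := norm_sub_le _ _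
      _ = 2 := by rw [hnormz, hnormz]; norm_num
  have hlb := norm_sub_one_ge ht
  have hlb0 : 0 < 4 * ((min t.val (q - t.val) : ℕ) : ℝ) / q := by positivity
  calc ‖∑ w ∈ Finset.Icc 1 W, ZMod.stdAddChar ((w : ZMod q) * t)‖
      = ‖∑ w ∈ Finset.Icc 1 W, z ^ w‖ := by
        congr 1; exact Finset.sum_congr rfl fun w _ => hrw w
    _ ≤ 2 / ‖z - 1‖ := hub
    _ ≤ 2 / (4 * ((min t.val (q - t.val) : ℕ) : ℝ) / q) := by
        apply div_le_div_of_nonneg_left (by norm_num) hlb0 hlb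
    _ = (q : ℝ) / (2 * ((min t.val (q - t.val) : ℕ) : ℝ)) := by
        have gen : ∀ Q M : ℝ, 0 < Q → 0 < M → 2/(4*M/Q) = Q/(2*M) := by
          intro Q M hQ hM; field_simp; ring
        exact gen _ _ hq0 (by linarith)

lemma completion {α : ZMod q} (ha : α ≠ 0) (η : ZMod q) (W : ℕ) :
    (∑ t : ZMod q, (∑ x : ZMod q, ZMod.stdAddChar (t * α⁻¹ * x ^ 2 + η * x)) *
      (∑ w ∈ Finset.Icc 1 W, ZMod.stdAddChar ((w : ZMod q) * (-t))))
    = (q : ℂ) * ∑ w ∈ Finset.Icc 1 W,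
        (∑ x : ZMod q, if x ^ 2 = α * (w : ZMod q) then ZMod.stdAddChar (η * x) else 0) := by
  classical
  calc ∑ t : ZMod q, (∑ x : ZMod q, ZMod.stdAddChar (t * α⁻¹ * x ^ 2 + η * x)) *
        (∑ w ∈ Finset.Icc 1 W, ZMod.stdAddChar ((w : ZMod q) * (-t)))
      = ∑ t : ZMod q, ∑ x : ZMod q, ∑ w ∈ Finset.Icc 1 W,
          ZMod.stdAddChar (η * x) * ZMod.stdAddChar ((α⁻¹ * x ^ 2 - (w : ZMod q)) * t) := by
        refine Finset.sum_congr rfl fun t _ => ?_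
        rw [Finset.sum_mul]
        refine Finset.sum_congr rfl fun x _ => ?_
        rw [Finset.mul_sum]
        refine Finset.sum_congr rfl fun w _ => ?_
        rw [← AddChar.map_add_eq_mul, ← AddChar.map_add_eq_mul]
        congr 1
        ring
    _ = ∑ x : ZMod q, ∑ w ∈ Finset.Icc 1 W,
          ZMod.stdAddChar (η * x) * ∑ t : ZMod q,
            ZMod.stdAddChar (t * (α⁻¹ * x ^ 2 - (w : ZMod q))) := by
        rw [Finset.sum_comm]
        refine Finset.sum_congr rfl fun x _ => ?_
        rw [Finset.sum_comm]
        refine Finset.sum_congr rfl fun w _ => ?_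
        rw [Finset.mul_sum]
        refine Finset.sum_congr rfl fun t _ => by rw [mul_comm (α⁻¹ * x ^ 2 - (w : ZMod q)) t]
    _ = ∑ x : ZMod q, ∑ w ∈ Finset.Icc 1 W,
          (if x ^ 2 = α * (w : ZMod q) then (q : ℂ) * ZMod.stdAddChar (η * x) else 0) := by
        refine Finset.sum_congr rfl fun x _ => Finset.sum_congr rfl fun w _ => ?_
        have horth := AddChar.sum_mulShift (ψ := ZMod.stdAddChar (N := q))
          (α⁻¹ * x ^ 2 - (w : ZMod q)) (ZMod.isPrimitive_stdAddChar q)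
        have hsum : ∑ t : ZMod q, ZMod.stdAddChar (t * (α⁻¹ * x ^ 2 - (w : ZMod q)))
            = if α⁻¹ * x ^ 2 - (w : ZMod q) = 0 then (Fintype.card (ZMod q) : ℂ) else 0 := by
          rw [horth]; split_ifs <;> simp
        rw [hsum]
        have hiff : α⁻¹ * x ^ 2 - (w : ZMod q) = 0 ↔ x ^ 2 = α * (w : ZMod q) := by
          rw [sub_eq_zero, inv_mul_eq_iff_eq_mul₀ ha]
        by_cases hcond : x ^ 2 = α * (w : ZMod q)
        · rw [if_pos (hiff.mpr hcond), if_pos hcond, ZMod.card q]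
          ring
        · rw [if_neg (fun hc => hcond (hiff.mp hc)), if_neg hcond, mul_zero]
    _ = (q : ℂ) * ∑ w ∈ Finset.Icc 1 W,
        (∑ x : ZMod q, if x ^ 2 = α * (w : ZMod q) then ZMod.stdAddChar (η * x) else 0) := by
        rw [Finset.sum_comm, Finset.mul_sum]
        refine Finset.sum_congr rfl fun w _ => ?_
        rw [Finset.mul_sum]
        refine Finset.sum_congr rfl fun x _ => ?_
        by_cases hcond : x ^ 2 = α * (w : ZMod q) <;> simp [hcond]

lemma harmonic_real (n : ℕ) :
    ∑ m ∈ Finset.Icc 1 n, (1 : ℝ) / m = (harmonic n : ℝ) := by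
  rw [harmonic_eq_sum_Icc]
  push_cast
  refine Finset.sum_congr rfl fun m _ => ?_
  rw [one_div]

lemma sum_inv_min_le :
    ∑ t ∈ Finset.univ.filter (fun t : ZMod q => t ≠ 0),
        (1 : ℝ) / ((min t.val (q - t.val) : ℕ) : ℝ)
      ≤ 2 * (1 + Real.log q) := by
  classical
  have hq2 : 2 ≤ q := hq.out.two_le
  have step1 : ∑ t ∈ Finset.univ.filter (fun t : ZMod q => t ≠ 0),
      (1 : ℝ) / ((min t.val (q - t.val) : ℕ) : ℝ)
      = ∑ m ∈ Finset.Icc 1 (q - 1), (1 : ℝ) / ((min m (q - m) : ℕ) : ℝ) := by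
    refine Finset.sum_nbij' (fun t => t.val) (fun m => (m : ZMod q)) ?_ ?_ ?_ ?_ ?_
    · intro t ht
      rw [Finset.mem_filter] at ht
      have h1 : 1 ≤ t.val := Nat.one_le_iff_ne_zero.mpr (by simpa [ZMod.val_eq_zero] using ht.2)
      have h2 : t.val < q := ZMod.val_lt t
      simp only [Finset.mem_Icc]
      omega
    · intro m hm
      rw [Finset.mem_Icc] at hm
      rw [Finset.mem_filter]
      refine ⟨Finset.mem_univ _, ?_⟩
      rw [Ne, ZMod.natCast_eq_zero_iff]
      intro hdvd
      have := Nat.le_of_dvd (by omega) hdvd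
      omega
    · intro t _
      exact ZMod.natCast_rightInverse t
    · intro m hm
      rw [Finset.mem_Icc] at hm
      exact ZMod.val_natCast_of_lt (by omega)
    · intro t _; rfl
  have step2 : ∑ m ∈ Finset.Icc 1 (q - 1), (1 : ℝ) / ((min m (q - m) : ℕ) : ℝ)
      ≤ ∑ m ∈ Finset.Icc 1 (q - 1), ((1 : ℝ) / m + 1 / (q - m : ℕ)) := by
    refine Finset.sum_le_sum fun m hm => ?_
    rw [Finset.mem_Icc] at hm
    have hm0 : (0:ℝ) < (m : ℝ) := by exact_mod_cast (by omega : 0 < m)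
    have hqm0 : (0:ℝ) < ((q - m : ℕ) : ℝ) := by exact_mod_cast (by omega : 0 < q - m)
    rcases min_choice m (q - m) with hmin | hmin <;> rw [hmin]
    · have : (0:ℝ) ≤ 1 / ((q - m : ℕ) : ℝ) := by positivity
      linarith
    · have : (0:ℝ) ≤ 1 / (m : ℝ) := by positivity
      linarith
  have step3 : ∑ m ∈ Finset.Icc 1 (q - 1), (1 : ℝ) / ((q - m : ℕ) : ℝ)
      = ∑ m ∈ Finset.Icc 1 (q - 1), (1 : ℝ) / m := by
    refine Finset.sum_nbij' (fun m => q - m) (fun m => q - m) ?_ ?_ ?_ ?_ ?_ <;>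
      intro m hm <;> simp only [Finset.mem_Icc] at * <;> try omega
  have step4 : ∑ m ∈ Finset.Icc 1 (q - 1), (1 : ℝ) / m ≤ 1 + Real.log q := by
    rw [harmonic_real]
    calc ((harmonic (q-1) : ℚ) : ℝ) ≤ 1 + Real.log (q - 1 : ℕ) := harmonic_le_one_add_log _
      _ ≤ 1 + Real.log q := by
        gcongr
        · exact_mod_cast (by omega : (1:ℕ) ≤ q - 1)
        · exact_mod_cast (by omega : q - 1 ≤ q)
  calc ∑ t ∈ Finset.univ.filter (fun t : ZMod q => t ≠ 0),
        (1 : ℝ) / ((min t.val (q - t.val) : ℕ) : ℝ)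
      = ∑ m ∈ Finset.Icc 1 (q - 1), (1 : ℝ) / ((min m (q - m) : ℕ) : ℝ) := step1
    _ ≤ ∑ m ∈ Finset.Icc 1 (q - 1), ((1 : ℝ) / m + 1 / (q - m : ℕ)) := step2
    _ = ∑ m ∈ Finset.Icc 1 (q - 1), (1 : ℝ) / m
        + ∑ m ∈ Finset.Icc 1 (q - 1), (1 : ℝ) / ((q - m : ℕ) : ℝ) := Finset.sum_add_distrib
    _ = 2 * (∑ m ∈ Finset.Icc 1 (q - 1), (1 : ℝ) / m) := by rw [step3]; ring
    _ ≤ 2 * (1 + Real.log q) := by linarith [step4]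

end Aux


theorem stmt8 :
    ∀ ε : ℝ, 0 < ε → ∃ C : ℝ, 0 < C ∧
      ∀ q : ℕ, ∀ _ : Fact q.Prime, Odd q →
      ∀ W : ℕ, 1 ≤ W → W ≤ q →
      ∀ a h : ℤ, IsCoprime (a * h) (q : ℤ) →
        ‖∑ w ∈ Finset.Icc 1 W, sqrtSum q a h w‖ ≤ C * (q : ℝ) ^ ((1 : ℝ)/2 + ε) := by
  intro ε hε
  refine ⟨1 + 1/ε, by positivity, ?_⟩
  intro q instQ hodd W hW1 hWq a h hco
  classical
  have hqprime : q.Prime := instQ.out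
  have hq2 : q ≠ 2 := by rintro rfl; exact (Nat.not_odd_iff_even.mpr (by norm_num)) hodd
  have hq0 : 0 < (q : ℝ) := by exact_mod_cast hqprime.pos
  have hq1 : (1:ℝ) ≤ (q:ℝ) := by exact_mod_cast hqprime.one_lt.le
  -- coprimality consequences
  have hunit : ((a : ZMod q) * (h : ZMod q)) ≠ 0 := by
    obtain ⟨u, v, huv⟩ := hco
    intro hz
    have hcast : (u : ZMod q) * ((a : ZMod q) * (h : ZMod q)) + (v : ZMod q) * ((q : ℤ) : ZMod q)
        = 1 := by
      have := congrArg (fun z : ℤ => (z : ZMod q)) huv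
      push_cast at this
      convert this using 2 <;> push_cast <;> ring
    rw [hz, mul_zero, zero_add] at hcast
    have : ((q : ℤ) : ZMod q) = 0 := by push_cast; exact ZMod.natCast_self q
    rw [this, mul_zero] at hcast
    exact one_ne_zero hcast.symm
  have a_ne : (a : ZMod q) ≠ 0 := fun hz => hunit (by rw [hz, zero_mul])
  have h_ne : (h : ZMod q) ≠ 0 := fun hz => hunit (by rw [hz, mul_zero])
  set α : ZMod q := (a : ZMod q)
  set η : ZMod q := (h : ZMod q)
  set S : ℂ := ∑ w ∈ Finset.Icc 1 W, sqrtSum q a h w with hS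
  have hSrw : S = ∑ w ∈ Finset.Icc 1 W,
      (∑ x : ZMod q, if x ^ 2 = α * (w : ZMod q) then ZMod.stdAddChar (η * x) else 0) := by
    rw [hS]
    refine Finset.sum_congr rfl fun w _ => ?_
    unfold sqrtSum
    refine Finset.sum_congr rfl fun x _ => ?_
    rw [eZ_eq]
  have key := completion (q := q) a_ne η W
  -- bound each term
  set M : ZMod q → ℝ := fun t => ((min t.val (q - t.val) : ℕ) : ℝ) with hM
  have hterm : ∀ t : ZMod q,
      ‖(∑ x : ZMod q, ZMod.stdAddChar (t * α⁻¹ * x ^ 2 + η * x)) *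
        (∑ w ∈ Finset.Icc 1 W, ZMod.stdAddChar ((w : ZMod q) * (-t)))‖
      ≤ if t ≠ 0 then Real.sqrt q * ((q : ℝ) / (2 * M t)) else 0 := by
    intro t
    by_cases ht : t = 0
    · subst ht
      simp only [ne_eq, not_true_eq_false, if_false]
      have hz : ∑ x : ZMod q, ZMod.stdAddChar ((0 : ZMod q) * α⁻¹ * x ^ 2 + η * x) = 0 := by
        have horth := AddChar.sum_mulShift (ψ := ZMod.stdAddChar (N := q)) η
          (ZMod.isPrimitive_stdAddChar q)
        rw [if_neg h_ne] at horth
        calc ∑ x : ZMod q, ZMod.stdAddChar ((0 : ZMod q) * α⁻¹ * x ^ 2 + η * x)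
            = ∑ x : ZMod q, ZMod.stdAddChar (x * η) := by
              refine Finset.sum_congr rfl fun x _ => ?_
              congr 1
              ring
          _ = 0 := by exact_mod_cast horth
      rw [hz, zero_mul, norm_zero]
    · rw [if_pos ht, norm_mul]
      have hb : t * α⁻¹ ≠ 0 := mul_ne_zero ht (inv_ne_zero a_ne)
      have hA : ‖∑ x : ZMod q, ZMod.stdAddChar (t * α⁻¹ * x ^ 2 + η * x)‖ = Real.sqrt q :=
        norm_quadSum hq2 hb η
      have hnt : -t ≠ 0 := neg_ne_zero.mpr ht
      have hB := norm_geom hnt W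
      have hMeq : ((min (-t).val (q - (-t).val) : ℕ) : ℝ) = M t := by
        haveI : NeZero t := ⟨ht⟩
        have hneg : (-t).val = q - t.val := ZMod.val_neg_of_ne_zero t
        have hvlt : t.val < q := ZMod.val_lt t
        have hv1 : 1 ≤ t.val := Nat.one_le_iff_ne_zero.mpr (by simpa [ZMod.val_eq_zero] using ht)
        rw [hM, hneg]
        congr 1
        omega
      rw [hMeq] at hB
      rw [hA]
      have hsq : 0 ≤ Real.sqrt (q:ℝ) := Real.sqrt_nonneg _
      exact mul_le_mul_of_nonneg_left hB hsq
  -- sum the bounds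
  have hMpos : ∀ t : ZMod q, t ≠ 0 → (1:ℝ) ≤ M t := by
    intro t ht
    have hvlt : t.val < q := ZMod.val_lt t
    have hv1 : 1 ≤ t.val := Nat.one_le_iff_ne_zero.mpr (by simpa [ZMod.val_eq_zero] using ht)
    show (1:ℝ) ≤ ((min t.val (q - t.val) : ℕ) : ℝ)
    exact_mod_cast (by omega : 1 ≤ min t.val (q - t.val))
  have hbound : (q : ℝ) * ‖S‖ ≤ Real.sqrt q * ((q:ℝ)/2) * (2 * (1 + Real.log q)) := by
    have h1 : (q : ℝ) * ‖S‖ = ‖(q : ℂ) * (∑ w ∈ Finset.Icc 1 W,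
        (∑ x : ZMod q, if x ^ 2 = α * (w : ZMod q) then ZMod.stdAddChar (η * x) else 0))‖ := by
      rw [← hSrw, norm_mul, Complex.norm_natCast]
    rw [h1, ← key]
    calc ‖∑ t : ZMod q, (∑ x : ZMod q, ZMod.stdAddChar (t * α⁻¹ * x ^ 2 + η * x)) *
          (∑ w ∈ Finset.Icc 1 W, ZMod.stdAddChar ((w : ZMod q) * (-t)))‖
        ≤ ∑ t : ZMod q, ‖(∑ x : ZMod q, ZMod.stdAddChar (t * α⁻¹ * x ^ 2 + η * x)) *
          (∑ w ∈ Finset.Icc 1 W, ZMod.stdAddChar ((w : ZMod q) * (-t)))‖ := norm_sum_le _ _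
      _ ≤ ∑ t : ZMod q, (if t ≠ 0 then Real.sqrt q * ((q : ℝ) / (2 * M t)) else 0) :=
          Finset.sum_le_sum fun t _ => hterm t
      _ = ∑ t ∈ Finset.univ.filter (fun t : ZMod q => t ≠ 0),
            Real.sqrt q * ((q : ℝ) / (2 * M t)) := (Finset.sum_filter _ _).symm
      _ = Real.sqrt q * ((q:ℝ)/2) * ∑ t ∈ Finset.univ.filter (fun t : ZMod q => t ≠ 0),
            (1:ℝ) / M t := by
          rw [Finset.mul_sum]
          refine Finset.sum_congr rfl fun t ht => ?_
          have hMt : M t ≠ 0 := by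
            have := hMpos t (by simpa using (Finset.mem_filter.mp ht).2)
            linarith
          field_simp
      _ ≤ Real.sqrt q * ((q:ℝ)/2) * (2 * (1 + Real.log q)) := by
          have hnn : 0 ≤ Real.sqrt (q:ℝ) * ((q:ℝ)/2) := by positivity
          exact mul_le_mul_of_nonneg_left (sum_inv_min_le (q := q)) hnn
  have hSle : ‖S‖ ≤ Real.sqrt q * (1 + Real.log q) := by
    have h2 : Real.sqrt q * ((q:ℝ)/2) * (2 * (1 + Real.log q))
        = (q : ℝ) * (Real.sqrt q * (1 + Real.log q)) := by ring
    rw [h2] at hbound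
    exact le_of_mul_le_mul_left hbound hq0
  -- final estimate
  have hlog : 1 + Real.log q ≤ (1 + 1/ε) * (q : ℝ) ^ ε := by
    have hrpow1 : (1:ℝ) ≤ (q:ℝ) ^ ε := Real.one_le_rpow hq1 hε.le
    have hrpow0 : (0:ℝ) < (q:ℝ) ^ ε := Real.rpow_pos_of_pos hq0 _
    have hlog2 : ε * Real.log q = Real.log ((q:ℝ) ^ ε) := (Real.log_rpow hq0 ε).symm
    have hlog3 : Real.log ((q:ℝ) ^ ε) ≤ (q:ℝ) ^ ε - 1 := Real.log_le_sub_one_of_pos hrpow0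
    have hlogq : Real.log (q:ℝ) ≤ (q:ℝ) ^ ε / ε := by
      rw [le_div_iff₀ hε, mul_comm]
      calc ε * Real.log q = Real.log ((q:ℝ) ^ ε) := hlog2
        _ ≤ (q:ℝ) ^ ε - 1 := hlog3
        _ ≤ (q:ℝ) ^ ε := by linarith
    calc 1 + Real.log q ≤ (q:ℝ) ^ ε + (q:ℝ) ^ ε / ε := by linarith
      _ = (1 + 1/ε) * (q : ℝ) ^ ε := by field_simp
  have hsqrt : Real.sqrt (q:ℝ) = (q:ℝ) ^ ((1:ℝ)/2) := Real.sqrt_eq_rpow _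
  calc ‖S‖ ≤ Real.sqrt q * (1 + Real.log q) := hSle
    _ ≤ Real.sqrt q * ((1 + 1/ε) * (q : ℝ) ^ ε) :=
        mul_le_mul_of_nonneg_left hlog (Real.sqrt_nonneg _)
    _ = (1 + 1/ε) * ((q:ℝ) ^ ((1:ℝ)/2) * (q:ℝ) ^ ε) := by rw [hsqrt]; ring
    _ = (1 + 1/ε) * (q : ℝ) ^ ((1:ℝ)/2 + ε) := by rw [← Real.rpow_add hq0]
end

section
/- There exists an absolute constant C > 0 such that the following holds. Let q be a prime, let I and J be intervals of integers containing h and H integers respectively, let s be an integer, and let I(s) denote the number of pairs (x,y) ∈ I × J with x ≡ ys (mod q). Then either I(s) ≤ C · max{ Hh/q, 1 }, or there exist integers a, b, not both zero, with |a| ≤ C h / I(s) and |b| ≤ C H / I(s), satisfying a ≡ b s (mod q). -/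
/-- The number of solutions to `x ≡ y s (mod q)` with `x ∈ I`, `y ∈ J`. -/
def congCount (q : ℕ) (I J : Finset ℤ) (s : ℤ) : ℕ :=
  ((I ×ˢ J).filter (fun t => (t.1 : ZMod q) = (t.2 : ZMod q) * (s : ZMod q))).card

private lemma gap_lemma (F : Finset ℤ) (a b g : ℤ) (hg : 0 < g)
    (hF : ∀ t ∈ F, a ≤ t ∧ t ≤ b)
    (hgap : ∀ t ∈ F, ∀ t' ∈ F, t ≠ t' → g ≤ |t - t'|)
    (hne : F.Nonempty) :
    ((F.card : ℤ) - 1) * g ≤ b - a := by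
  obtain ⟨t0, ht0⟩ := hne
  have hab : a ≤ b := le_trans (hF t0 ht0).1 (hF t0 ht0).2
  have key : ∀ t ∈ F, ∀ t' ∈ F, t < t' → (t - a) / g < (t' - a) / g := by
    intro t ht t' ht' hlt
    have hg' : g ≤ t' - t := by
      have := hgap t ht t' ht' (ne_of_lt hlt)
      rwa [abs_sub_comm, abs_of_pos (by linarith)] at this
    have h1 : (t - a + 1 * g) / g = (t - a) / g + 1 := Int.add_mul_ediv_right _ _ (ne_of_gt hg)
    have h2 : (t - a + 1 * g) / g ≤ (t' - a) / g := Int.ediv_le_ediv hg (by linarith)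
    omega
  have hinj : Set.InjOn (fun t => (t - a) / g) F := by
    intro t ht t' ht' hEq
    by_contra hne'
    rcases lt_or_gt_of_ne hne' with hlt | hlt
    · exact absurd hEq (ne_of_lt (key t ht t' ht' hlt))
    · exact absurd hEq.symm (ne_of_lt (key t' ht' t ht hlt))
  have hsub : F.image (fun t => (t - a) / g) ⊆ Finset.Icc 0 ((b - a) / g) := by
    intro x hx
    obtain ⟨t, ht, rfl⟩ := Finset.mem_image.mp hx
    exact Finset.mem_Icc.mpr ⟨Int.ediv_nonneg (by linarith [(hF t ht).1]) (le_of_lt hg),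
      Int.ediv_le_ediv hg (by linarith [(hF t ht).2])⟩
  have hcard : F.card ≤ ((b - a) / g + 1).toNat := by
    rw [← Finset.card_image_of_injOn hinj]
    calc _ ≤ (Finset.Icc (0:ℤ) ((b-a)/g)).card := Finset.card_le_card hsub
    _ = ((b - a) / g + 1).toNat := by rw [Int.card_Icc]; congr 1; ring
  have hq0 : 0 ≤ (b - a) / g := Int.ediv_nonneg (by linarith) (le_of_lt hg)
  have hcard' : (F.card : ℤ) ≤ (b - a) / g + 1 := by omega
  have hmod : b - a = g * ((b - a) / g) + (b - a) % g := (Int.mul_ediv_add_emod _ _).symm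
  have hmod2 : 0 ≤ (b - a) % g := Int.emod_nonneg _ (ne_of_gt hg)
  nlinarith [mul_le_mul_of_nonneg_right (by linarith : (F.card : ℤ) - 1 ≤ (b - a) / g) (le_of_lt hg),
    mul_comm ((b-a)/g) g]

private lemma gap_abs (A B HH hh X Y : ℤ) (hA : 0 < A) (hHH : 0 < HH) (hhh : 0 < hh)
    (hord : B * hh ≤ A * HH)
    (hmin : A * HH ≤ max (X * HH) (Y * hh))
    (hcross : B * X = A * Y)
    (hB : 0 ≤ B) (hX : 0 ≤ X) (hY : 0 ≤ Y) :
    A ≤ X := by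
  rcases le_max_iff.mp hmin with h1 | h1
  · exact le_of_mul_le_mul_right h1 hHH
  · rcases (eq_or_lt_of_le hB).imp Eq.symm id with hB0 | hB0
    · exfalso
      have hAY : A * Y = 0 := by rw [← hcross, hB0, zero_mul]
      have hY0 : Y = 0 := by
        rcases mul_eq_zero.mp hAY with h | h
        · exact absurd h (ne_of_gt hA)
        · exact h
      rw [hY0] at h1; nlinarith
    · have h2 : A * (A * HH) ≤ A * (Y * hh) := mul_le_mul_of_nonneg_left h1 hA.le
      have h3 : A * (B * hh) ≤ A * (A * HH) := mul_le_mul_of_nonneg_left hord hA.le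
      have h4 : B * (A * hh) ≤ B * (X * hh) := by nlinarith
      have h5 := le_of_mul_le_mul_left h4 hB0
      exact le_of_mul_le_mul_right h5 hhh

set_option maxHeartbeats 2000000 in
theorem stmt9 :
    ∃ C : ℝ, 0 < C ∧
      ∀ q : ℕ, q.Prime →
      ∀ h H : ℕ, ∀ u v : ℤ,
      ∀ s : ℤ,
        (congCount q (Finset.Ioc u (u + h)) (Finset.Ioc v (v + H)) s : ℝ) ≤
            C * max ((H * h : ℝ) / q) 1 ∨
        ∃ a b : ℤ, ¬ (a = 0 ∧ b = 0) ∧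
          (|a| : ℝ) ≤ C * h / (congCount q (Finset.Ioc u (u + h)) (Finset.Ioc v (v + H)) s : ℝ) ∧
          (|b| : ℝ) ≤ C * H / (congCount q (Finset.Ioc u (u + h)) (Finset.Ioc v (v + H)) s : ℝ) ∧
          (a : ZMod q) = (b : ZMod q) * (s : ZMod q) := by
  refine ⟨14, by norm_num, ?_⟩
  intro q hq h H u v s
  by_cases hcase :
      (congCount q (Finset.Ioc u (u + (h:ℤ))) (Finset.Ioc v (v + (H:ℤ))) s : ℝ) ≤
        14 * max ((H * h : ℝ) / q) 1
  · exact Or.inl hcase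
  right
  push_neg at hcase
  set S : Finset (ℤ × ℤ) :=
    ((Finset.Ioc u (u + (h:ℤ)) ×ˢ Finset.Ioc v (v + (H:ℤ))).filter
      (fun t => (t.1 : ZMod q) = (t.2 : ZMod q) * (s : ZMod q))) with hSdef
  have hNdef : congCount q (Finset.Ioc u (u + (h:ℤ))) (Finset.Ioc v (v + (H:ℤ))) s = S.card := rfl
  rw [hNdef] at hcase ⊢
  set N : ℕ := S.card with hNS
  have hq0 : 0 < q := hq.pos
  have hqZ : 0 < (q:ℤ) := by exact_mod_cast hq0
  have hqR : (0:ℝ) < q := by exact_mod_cast hq0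
  have hmax1 : (1:ℝ) ≤ max ((H * h : ℝ) / q) 1 := le_max_right _ _
  have hN14R : (14:ℝ) < N := lt_of_le_of_lt (by nlinarith) hcase
  have hN15 : 15 ≤ N := by exact_mod_cast hN14R
  have hNZ : (0:ℤ) < N := by exact_mod_cast Nat.pos_of_ne_zero (by omega)
  have hNR : (0:ℝ) < N := by exact_mod_cast Nat.pos_of_ne_zero (by omega)
  -- 14 h H < N q
  have hNq : 14 * ((h:ℤ) * (H:ℤ)) < (N:ℤ) * (q:ℤ) := by
    have h1 : (14:ℝ) * ((H * h : ℝ) / q) < N :=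
      lt_of_le_of_lt (by nlinarith [le_max_left ((H * h : ℝ) / q) 1]) hcase
    have h2 : (14:ℝ) * ((H:ℝ) * h) < N * q := by
      have e : ((H:ℝ) * h) / q * q = (H:ℝ) * h := div_mul_cancel₀ _ (ne_of_gt hqR)
      have := mul_lt_mul_of_pos_right h1 hqR
      rw [mul_assoc, e] at this
      linarith
    have h3 : (14:ℝ) * ((h:ℝ) * H) < N * q := by rw [mul_comm (h:ℝ) (H:ℝ)]; exact h2
    exact_mod_cast h3
  -- membership facts
  have hmem : ∀ p ∈ S, (u < p.1 ∧ p.1 ≤ u + (h:ℤ)) ∧ (v < p.2 ∧ p.2 ≤ v + (H:ℤ)) ∧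
      ((p.1 : ZMod q) = (p.2 : ZMod q) * (s : ZMod q)) := by
    intro p hp
    rw [hSdef] at hp
    simp only [Finset.mem_filter, Finset.mem_product, Finset.mem_Ioc] at hp
    tauto
  have hScard2 : 1 < S.card := by omega
  obtain ⟨p1, hp1, p2, hp2, hp12⟩ := Finset.one_lt_card.mp hScard2
  have hh0 : 0 < (h:ℤ) := by have := (hmem p1 hp1).1; linarith [this.1, this.2]
  have hH0 : 0 < (H:ℤ) := by have := (hmem p1 hp1).2.1; linarith [this.1, this.2]
  -- difference set
  set D : Finset (ℤ × ℤ) :=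
    ((S ×ˢ S).filter (fun r => r.1 ≠ r.2)).image (fun r => r.1 - r.2) with hDdef
  have hdiffD : ∀ p ∈ S, ∀ p' ∈ S, p ≠ p' → p - p' ∈ D := by
    intro p hp p' hp' hne
    rw [hDdef]
    exact Finset.mem_image.mpr ⟨(p, p'),
      Finset.mem_filter.mpr ⟨Finset.mem_product.mpr ⟨hp, hp'⟩, hne⟩, rfl⟩
  have hDne : D.Nonempty := ⟨p1 - p2, hdiffD p1 hp1 p2 hp2 hp12⟩
  have hDprop : ∀ e ∈ D, e ≠ 0 ∧ |e.1| ≤ (h:ℤ) ∧ |e.2| ≤ (H:ℤ) ∧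
      ((e.1 : ZMod q) = (e.2 : ZMod q) * (s : ZMod q)) := by
    intro e he
    rw [hDdef] at he
    obtain ⟨r, hr, rfl⟩ := Finset.mem_image.mp he
    obtain ⟨hr12, hrne⟩ := Finset.mem_filter.mp hr
    obtain ⟨ha, hb⟩ := Finset.mem_product.mp hr12
    obtain ⟨hx1, hy1, hc1⟩ := hmem _ ha
    obtain ⟨hx2, hy2, hc2⟩ := hmem _ hb
    refine ⟨sub_ne_zero.mpr hrne, ?_, ?_, ?_⟩
    · simp only [Prod.fst_sub]
      rw [abs_le]; constructor <;> linarith [hx1.1, hx1.2, hx2.1, hx2.2]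
    · simp only [Prod.snd_sub]
      rw [abs_le]; constructor <;> linarith [hy1.1, hy1.2, hy2.1, hy2.2]
    · simp only [Prod.fst_sub, Prod.snd_sub]
      push_cast
      rw [hc1, hc2]
      ring
  obtain ⟨d, hdD, hdmin⟩ :=
    Finset.exists_min_image D (fun e => max (|e.1| * (H:ℤ)) (|e.2| * (h:ℤ))) hDne
  obtain ⟨hd0, hdh, hdH, hdcong⟩ := hDprop d hdD
  set w : ℤ := max (|d.1| * (H:ℤ)) (|d.2| * (h:ℤ)) with hwdef
  have hw1 : 1 ≤ w := by
    by_contra hcon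
    push_neg at hcon
    have h1 : |d.1| * (H:ℤ) < 1 := lt_of_le_of_lt (le_max_left _ _) hcon
    have h2 : |d.2| * (h:ℤ) < 1 := lt_of_le_of_lt (le_max_right _ _) hcon
    have e1 : |d.1| * 1 ≤ |d.1| * (H:ℤ) := mul_le_mul_of_nonneg_left (by omega) (abs_nonneg d.1)
    have e2 : |d.2| * 1 ≤ |d.2| * (h:ℤ) := mul_le_mul_of_nonneg_left (by omega) (abs_nonneg d.2)
    have hd1 : d.1 = 0 := abs_nonpos_iff.mp (Int.lt_add_one_iff.mp (by linarith))
    have hd2 : d.2 = 0 := abs_nonpos_iff.mp (Int.lt_add_one_iff.mp (by linarith))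
    exact hd0 (Prod.ext hd1 hd2)
  have hwhH : w ≤ (h:ℤ) * (H:ℤ) := by
    apply max_le
    · nlinarith [abs_nonneg d.1]
    · nlinarith [abs_nonneg d.2]
  -- fibers
  set f : ℤ × ℤ → ℤ := fun p => d.2 * p.1 - d.1 * p.2 with hfdef
  have hfval : ∀ p : ℤ × ℤ, f p = d.2 * p.1 - d.1 * p.2 := fun p => rfl
  set T : Finset ℤ := S.image f with hTdef
  have claimA : ∀ c ∈ T, ((S.filter fun p => f p = c).card : ℤ) * w ≤ (h:ℤ) * (H:ℤ) + w := by
    intro c hc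
    rw [hTdef] at hc
    set F : Finset (ℤ × ℤ) := S.filter fun p => f p = c with hFdef
    obtain ⟨pc, hpcS, hpcf⟩ := Finset.mem_image.mp hc
    have hFne : F.Nonempty := ⟨pc, Finset.mem_filter.mpr ⟨hpcS, hpcf⟩⟩
    have hFsub : ∀ p ∈ F, p ∈ S ∧ f p = c := by
      intro p hp; rw [hFdef] at hp; exact Finset.mem_filter.mp hp
    by_cases hcw : |d.2| * (h:ℤ) ≤ |d.1| * (H:ℤ)
    · -- w = |d.1| * H, project to first coordinate
      have hwE : w = |d.1| * (H:ℤ) := max_eq_left hcw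
      have hα : 0 < |d.1| := by nlinarith [abs_nonneg d.1]
      have hd1ne : d.1 ≠ 0 := abs_pos.mp hα
      have hinj : Set.InjOn Prod.fst (F : Set (ℤ × ℤ)) := by
        intro p hp p' hp' hEq
        have h1 := (hFsub p hp).2
        have h2 := (hFsub p' hp').2
        rw [hfval] at h1 h2
        rw [hEq] at h1
        have h3 : d.1 * p.2 = d.1 * p'.2 := by linarith
        exact Prod.ext hEq (mul_left_cancel₀ hd1ne h3)
      set X : Finset ℤ := F.image Prod.fst with hXdef
      have hgapX : ∀ t ∈ X, ∀ t' ∈ X, t ≠ t' → |d.1| ≤ |t - t'| := by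
        intro t ht t' ht' htne
        rw [hXdef] at ht ht'
        obtain ⟨p, hp, rfl⟩ := Finset.mem_image.mp ht
        obtain ⟨p', hp', rfl⟩ := Finset.mem_image.mp ht'
        have hpne : p ≠ p' := fun hEq => htne (by rw [hEq])
        have heD : p - p' ∈ D := hdiffD p (hFsub p hp).1 p' (hFsub p' hp').1 hpne
        have hminE := hdmin _ heD
        simp only [Prod.fst_sub, Prod.snd_sub] at hminE
        have h1 := (hFsub p hp).2
        have h2 := (hFsub p' hp').2
        rw [hfval] at h1 h2
        have hcross : d.2 * (p.1 - p'.1) = d.1 * (p.2 - p'.2) := by ring_nf; linarith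
        have hcrossabs : |d.2| * |p.1 - p'.1| = |d.1| * |p.2 - p'.2| := by
          rw [← abs_mul, ← abs_mul, hcross]
        exact gap_abs |d.1| |d.2| (H:ℤ) (h:ℤ) |p.1 - p'.1| |p.2 - p'.2| hα hH0 hh0
          hcw (le_trans (le_of_eq hwE.symm) hminE) hcrossabs
          (abs_nonneg _) (abs_nonneg _) (abs_nonneg _)
      have hXmem : ∀ t ∈ X, u + 1 ≤ t ∧ t ≤ u + (h:ℤ) := by
        intro t ht
        rw [hXdef] at ht
        obtain ⟨p, hp, rfl⟩ := Finset.mem_image.mp ht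
        have := (hmem p (hFsub p hp).1).1
        omega
      have hXne : X.Nonempty := hFne.image _
      have hgl := gap_lemma X (u+1) (u + (h:ℤ)) |d.1| hα hXmem hgapX hXne
      have hcardX : X.card = F.card := Finset.card_image_of_injOn hinj
      have hkey : ((F.card:ℤ) - 1) * w ≤ (h:ℤ) * (H:ℤ) := by
        rw [hwE]
        have e1 : (((F.card:ℤ) - 1) * |d.1|) * (H:ℤ) ≤ ((h:ℤ) - 1) * (H:ℤ) := by
          apply mul_le_mul_of_nonneg_right _ hH0.le
          rw [← hcardX]
          linarith [hgl]
        nlinarith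
      nlinarith [hkey]
    · -- w = |d.2| * h, project to second coordinate
      push_neg at hcw
      have hwE : w = |d.2| * (h:ℤ) := max_eq_right hcw.le
      have hβ : 0 < |d.2| := by nlinarith [abs_nonneg d.2]
      have hd2ne : d.2 ≠ 0 := abs_pos.mp hβ
      have hinj : Set.InjOn Prod.snd (F : Set (ℤ × ℤ)) := by
        intro p hp p' hp' hEq
        have h1 := (hFsub p hp).2
        have h2 := (hFsub p' hp').2
        rw [hfval] at h1 h2
        rw [hEq] at h1
        have h3 : d.2 * p.1 = d.2 * p'.1 := by linarith
        exact Prod.ext (mul_left_cancel₀ hd2ne h3) hEq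
      set X : Finset ℤ := F.image Prod.snd with hXdef
      have hgapX : ∀ t ∈ X, ∀ t' ∈ X, t ≠ t' → |d.2| ≤ |t - t'| := by
        intro t ht t' ht' htne
        rw [hXdef] at ht ht'
        obtain ⟨p, hp, rfl⟩ := Finset.mem_image.mp ht
        obtain ⟨p', hp', rfl⟩ := Finset.mem_image.mp ht'
        have hpne : p ≠ p' := fun hEq => htne (by rw [hEq])
        have heD : p - p' ∈ D := hdiffD p (hFsub p hp).1 p' (hFsub p' hp').1 hpne
        have hminE := hdmin _ heD
        simp only [Prod.fst_sub, Prod.snd_sub] at hminE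
        have h1 := (hFsub p hp).2
        have h2 := (hFsub p' hp').2
        rw [hfval] at h1 h2
        have hcross : d.2 * (p.1 - p'.1) = d.1 * (p.2 - p'.2) := by ring_nf; linarith
        have hcrossabs : |d.1| * |p.2 - p'.2| = |d.2| * |p.1 - p'.1| := by
          rw [← abs_mul, ← abs_mul, hcross]
        have hminE' : |d.2| * (h:ℤ) ≤ max (|p.2 - p'.2| * (h:ℤ)) (|p.1 - p'.1| * (H:ℤ)) := by
          rw [max_comm]
          exact le_trans (le_of_eq hwE.symm) hminE
        exact gap_abs |d.2| |d.1| (h:ℤ) (H:ℤ) |p.2 - p'.2| |p.1 - p'.1| hβ hh0 hH0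
          hcw.le hminE' hcrossabs (abs_nonneg _) (abs_nonneg _) (abs_nonneg _)
      have hXmem : ∀ t ∈ X, v + 1 ≤ t ∧ t ≤ v + (H:ℤ) := by
        intro t ht
        rw [hXdef] at ht
        obtain ⟨p, hp, rfl⟩ := Finset.mem_image.mp ht
        have := (hmem p (hFsub p hp).1).2.1
        omega
      have hXne : X.Nonempty := hFne.image _
      have hgl := gap_lemma X (v+1) (v + (H:ℤ)) |d.2| hβ hXmem hgapX hXne
      have hcardX : X.card = F.card := Finset.card_image_of_injOn hinj
      have hkey : ((F.card:ℤ) - 1) * w ≤ (h:ℤ) * (H:ℤ) := by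
        rw [hwE]
        have e1 : (((F.card:ℤ) - 1) * |d.2|) * (h:ℤ) ≤ ((H:ℤ) - 1) * (h:ℤ) := by
          apply mul_le_mul_of_nonneg_right _ hh0.le
          rw [← hcardX]
          linarith [hgl]
        nlinarith
      nlinarith [hkey]
  -- sum over fibers
  have hsumA : (N:ℤ) * w ≤ (T.card:ℤ) * ((h:ℤ) * (H:ℤ) + w) := by
    have h1 : (N:ℤ) = ∑ c ∈ T, ((S.filter fun p => f p = c).card : ℤ) := by
      rw [hNS, hTdef, Finset.card_eq_sum_card_image f S]
      push_cast
      rfl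
    calc (N:ℤ) * w = ∑ c ∈ T, ((S.filter fun p => f p = c).card : ℤ) * w := by
          rw [h1, Finset.sum_mul]
    _ ≤ ∑ _c ∈ T, ((h:ℤ) * (H:ℤ) + w) := Finset.sum_le_sum claimA
    _ = (T.card:ℤ) * ((h:ℤ) * (H:ℤ) + w) := by rw [Finset.sum_const, nsmul_eq_mul]
  -- gaps between fiber labels
  have hTq : ∀ t ∈ T, ∀ t' ∈ T, t ≠ t' → (q:ℤ) ≤ |t - t'| := by
    intro t ht t' ht' htne
    rw [hTdef] at ht ht'
    obtain ⟨p, hp, rfl⟩ := Finset.mem_image.mp ht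
    obtain ⟨p', hp', rfl⟩ := Finset.mem_image.mp ht'
    have hdvd : (q:ℤ) ∣ (f p - f p') := by
      have hz : ((f p - f p' : ℤ) : ZMod q) = 0 := by
        rw [hfval, hfval]
        push_cast
        rw [(hmem p hp).2.2, (hmem p' hp').2.2, hdcong]
        ring
      exact_mod_cast (ZMod.intCast_zmod_eq_zero_iff_dvd _ _).mp hz
    exact Int.le_of_dvd (abs_pos.mpr (sub_ne_zero.mpr htne)) ((dvd_abs _ _).mpr hdvd)
  have hTbound : ∀ t ∈ T, f p1 - 2*w ≤ t ∧ t ≤ f p1 + 2*w := by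
    intro t ht
    rw [hTdef] at ht
    obtain ⟨p, hp, rfl⟩ := Finset.mem_image.mp ht
    have hx := (hmem p hp).1
    have hy := (hmem p hp).2.1
    have hx1 := (hmem p1 hp1).1
    have hy1 := (hmem p1 hp1).2.1
    have e1 : |p.1 - p1.1| ≤ (h:ℤ) := by rw [abs_le]; omega
    have e2 : |p.2 - p1.2| ≤ (H:ℤ) := by rw [abs_le]; omega
    have e3 : |f p - f p1| ≤ 2 * w := by
      have eq1 : f p - f p1 = d.2 * (p.1 - p1.1) - d.1 * (p.2 - p1.2) := by
        rw [hfval, hfval]; ring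
      rw [eq1]
      calc |d.2 * (p.1 - p1.1) - d.1 * (p.2 - p1.2)|
          ≤ |d.2 * (p.1 - p1.1)| + |d.1 * (p.2 - p1.2)| := abs_sub _ _
      _ = |d.2| * |p.1 - p1.1| + |d.1| * |p.2 - p1.2| := by rw [abs_mul, abs_mul]
      _ ≤ |d.2| * (h:ℤ) + |d.1| * (H:ℤ) := by
          have a1 := mul_le_mul_of_nonneg_left e1 (abs_nonneg d.2)
          have a2 := mul_le_mul_of_nonneg_left e2 (abs_nonneg d.1)
          linarith
      _ ≤ w + w := add_le_add (le_max_right _ _) (le_max_left _ _)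
      _ = 2 * w := by ring
    rw [abs_le] at e3
    constructor <;> linarith [e3.1, e3.2]
  have hTne : T.Nonempty := ⟨f p1, by rw [hTdef]; exact Finset.mem_image_of_mem f hp1⟩
  have hB := gap_lemma T (f p1 - 2*w) (f p1 + 2*w) (q:ℤ) hqZ hTbound hTq hTne
  -- final arithmetic
  have hNw : 3 * (N:ℤ) * w ≤ 14 * ((h:ℤ) * (H:ℤ)) := by
    have hm : (T.card:ℤ) * (q:ℤ) ≤ 4*w + (q:ℤ) := by linarith [hB]
    have hposhw : (0:ℤ) < (h:ℤ) * (H:ℤ) + w := by nlinarith [mul_pos hh0 hH0]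
    have P1 : (N:ℤ) * w * (q:ℤ) ≤ ((T.card:ℤ) * ((h:ℤ) * (H:ℤ) + w)) * (q:ℤ) :=
      mul_le_mul_of_nonneg_right hsumA hqZ.le
    have P3 : ((T.card:ℤ) * (q:ℤ)) * ((h:ℤ) * (H:ℤ) + w) ≤
        (4*w + (q:ℤ)) * ((h:ℤ) * (H:ℤ) + w) :=
      mul_le_mul_of_nonneg_right hm hposhw.le
    have P4 : (N:ℤ) * w * (q:ℤ) ≤ 8 * w * ((h:ℤ) * (H:ℤ)) + 2 * (q:ℤ) * ((h:ℤ) * (H:ℤ)) := by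
      have w2 : w * w ≤ ((h:ℤ) * (H:ℤ)) * w := mul_le_mul_of_nonneg_right hwhH (by linarith)
      have wq : (q:ℤ) * w ≤ (q:ℤ) * ((h:ℤ) * (H:ℤ)) := mul_le_mul_of_nonneg_left hwhH hqZ.le
      linarith [P1, P3, w2, wq]
    have P5 : 14 * ((h:ℤ) * (H:ℤ)) * w ≤ (N:ℤ) * (q:ℤ) * w :=
      mul_le_mul_of_nonneg_right hNq.le (show (0:ℤ) ≤ w by linarith)
    have P6 : 6 * ((N:ℤ) * w) * (q:ℤ) ≤ 28 * ((h:ℤ) * (H:ℤ)) * (q:ℤ) := by linarith [P4, P5]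
    have P7 : 6 * ((N:ℤ) * w) ≤ 28 * ((h:ℤ) * (H:ℤ)) := le_of_mul_le_mul_right (by linarith) hqZ
    linarith
  -- extract coordinate bounds
  have h_a : (N:ℤ) * |d.1| ≤ 14 * (h:ℤ) := by
    have e1 : |d.1| * (H:ℤ) ≤ w := le_max_left _ _
    have e2 : 3 * (N:ℤ) * (|d.1| * (H:ℤ)) ≤ 3 * (N:ℤ) * w :=
      mul_le_mul_of_nonneg_left e1 (by positivity)
    have e3 : (3 * (N:ℤ) * |d.1|) * (H:ℤ) ≤ (14 * (h:ℤ)) * (H:ℤ) := by nlinarith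
    have := le_of_mul_le_mul_right e3 hH0
    nlinarith [abs_nonneg d.1]
  have h_b : (N:ℤ) * |d.2| ≤ 14 * (H:ℤ) := by
    have e1 : |d.2| * (h:ℤ) ≤ w := le_max_right _ _
    have e2 : 3 * (N:ℤ) * (|d.2| * (h:ℤ)) ≤ 3 * (N:ℤ) * w :=
      mul_le_mul_of_nonneg_left e1 (by positivity)
    have e3 : (3 * (N:ℤ) * |d.2|) * (h:ℤ) ≤ (14 * (H:ℤ)) * (h:ℤ) := by nlinarith
    have := le_of_mul_le_mul_right e3 hh0
    nlinarith [abs_nonneg d.2]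
  refine ⟨d.1, d.2, ?_, ?_, ?_, hdcong⟩
  · rintro ⟨e1, e2⟩
    exact hd0 (Prod.ext e1 e2)
  · rw [le_div_iff₀ hNR]
    have : ((|d.1| * (N:ℤ) : ℤ) : ℝ) ≤ ((14 * (h:ℤ) : ℤ) : ℝ) := by
      exact_mod_cast (by linarith [h_a] : |d.1| * (N:ℤ) ≤ 14 * (h:ℤ))
    push_cast at this ⊢
    linarith
  · rw [le_div_iff₀ hNR]
    have : ((|d.2| * (N:ℤ) : ℤ) : ℝ) ≤ ((14 * (H:ℤ) : ℤ) : ℝ) := by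
      exact_mod_cast (by linarith [h_b] : |d.2| * (N:ℤ) ≤ 14 * (H:ℤ))
    push_cast at this ⊢
    linarith
end

section
/- For every ε > 0 there exists a constant C(ε) > 0 such that for every odd prime q and every positive integer N ≤ q^{1/2}, the additive energy of modular square roots satisfies E_q(N) ≤ C(ε) ( N⁶ q^{−1+ε} + N² q^{ε} ), where E_q(N) := #{ (u,v,x,y) ∈ F_q⁴ : u + v = x + y and the representatives of u², v², x², y² all lie in the interval [N, 2N) }. -/
def kf (t : ℤ × ℤ × ℤ × ℤ) : ℤ := t.1 + t.2.1 - t.2.2.1 - t.2.2.2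
def Wf (t : ℤ × ℤ × ℤ × ℤ) : ℤ := (kf t)^2 + 4*(t.2.2.1*t.2.2.2) - 4*(t.1*t.2.1)
def Gf (t : ℤ × ℤ × ℤ × ℤ) : ℤ := (Wf t)^2 - 16*(kf t)^2*(t.2.2.1*t.2.2.2)

noncomputable def boxI (N : ℕ) : Finset ℤ := Finset.Ico (N:ℤ) (2*N)

noncomputable def TT (q N : ℕ) : Finset (ℤ × ℤ × ℤ × ℤ) :=
  (boxI N ×ˢ boxI N ×ˢ boxI N ×ˢ boxI N).filter (fun t => (q:ℤ) ∣ Gf t)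

lemma sign_recover {q : ℕ} [NeZero q] (hodd : Odd q) (u u' : ZMod q)
    (hu : u ≠ 0) (hsq : u ^ 2 = u' ^ 2) (hq : q.Prime)
    (hbit : decide (2 * u.val < q) = decide (2 * u'.val < q)) : u = u' := by
  haveI : Fact q.Prime := ⟨hq⟩
  have h2 : (u' - u) * (u' + u) = 0 := by ring_nf; linear_combination -hsq
  rcases mul_eq_zero.mp h2 with h | h
  · exact (sub_eq_zero.mp h).symm
  · exfalso
    have hu' : u' = -u := by linear_combination h
    haveI : NeZero u := ⟨hu⟩
    have hval : (-u).val = q - u.val := ZMod.val_neg_of_ne_zero u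
    have hupos : 0 < u.val := by
      rcases Nat.eq_zero_or_pos u.val with h | h
      · exact absurd ((ZMod.val_eq_zero u).mp h) hu
      · exact h
    have hule : u.val < q := ZMod.val_lt u
    have hqodd : q % 2 = 1 := Nat.odd_iff.mp hodd
    rw [hu', hval] at hbit
    rcases Nat.lt_or_ge (2 * u.val) q with hlt | hge
    · have h1 : decide (2 * u.val < q) = true := decide_eq_true hlt
      have h2 : ¬ (2 * (q - u.val) < q) := by omega
      rw [h1, decide_eq_false h2] at hbit; exact Bool.noConfusion hbit
    · have h1 : decide (2 * u.val < q) = false := decide_eq_false (by omega)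
      have h2 : (2 * (q - u.val) < q) := by omega
      rw [h1, decide_eq_true h2] at hbit; exact Bool.noConfusion hbit

/-- `E_q(N)`: the number of quadruples `(u,v,x,y) ∈ F_q⁴` with `u + v = x + y` such that
the representatives (in `{0,…,q−1}`) of `u², v², x², y²` all lie in `[N, 2N)`. -/
noncomputable def EqN (q N : ℕ) : ℕ :=
  {t : ZMod q × ZMod q × ZMod q × ZMod q |
    t.1 + t.2.1 = t.2.2.1 + t.2.2.2 ∧
    N ≤ (t.1 ^ 2).val ∧ (t.1 ^ 2).val < 2 * N ∧
    N ≤ (t.2.1 ^ 2).val ∧ (t.2.1 ^ 2).val < 2 * N ∧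
    N ≤ (t.2.2.1 ^ 2).val ∧ (t.2.2.1 ^ 2).val < 2 * N ∧
    N ≤ (t.2.2.2 ^ 2).val ∧ (t.2.2.2 ^ 2).val < 2 * N}.ncard


lemma val_sq_cast {q : ℕ} [NeZero q] (u : ZMod q) :
    ((((u ^ 2).val : ℤ) : ZMod q)) = u ^ 2 := by
  push_cast
  rw [ZMod.natCast_val, ZMod.cast_id]

lemma stepA (q N : ℕ) (hq : q.Prime) (hodd : Odd q) (hN : 1 ≤ N) :
    EqN q N ≤ 8 * (TT q N).card := by
  haveI : Fact q.Prime := ⟨hq⟩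
  haveI : NeZero q := ⟨hq.ne_zero⟩
  rw [EqN]
  set S : Set (ZMod q × ZMod q × ZMod q × ZMod q) :=
    {t : ZMod q × ZMod q × ZMod q × ZMod q |
      t.1 + t.2.1 = t.2.2.1 + t.2.2.2 ∧
      N ≤ (t.1 ^ 2).val ∧ (t.1 ^ 2).val < 2 * N ∧
      N ≤ (t.2.1 ^ 2).val ∧ (t.2.1 ^ 2).val < 2 * N ∧
      N ≤ (t.2.2.1 ^ 2).val ∧ (t.2.2.1 ^ 2).val < 2 * N ∧
      N ≤ (t.2.2.2 ^ 2).val ∧ (t.2.2.2 ^ 2).val < 2 * N} with hS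
  set F : ZMod q × ZMod q × ZMod q × ZMod q → (ℤ × ℤ × ℤ × ℤ) × (Bool × Bool × Bool) :=
    fun t => ((((t.1 ^ 2).val : ℤ), ((t.2.1 ^ 2).val : ℤ), ((t.2.2.1 ^ 2).val : ℤ),
      ((t.2.2.2 ^ 2).val : ℤ)),
      (decide (2 * t.1.val < q), decide (2 * t.2.1.val < q), decide (2 * t.2.2.1.val < q)))
    with hF
  have hnz : ∀ u : ZMod q, N ≤ (u ^ 2).val → u ≠ 0 := by
    intro u hu h0
    rw [h0] at hu
    simp [ZMod.val_zero] at hu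
    omega
  have hinj : Set.InjOn F S := by
    rintro ⟨u, v, x, y⟩ hm ⟨u', v', x', y'⟩ hm' he
    obtain ⟨hsum, h1, h2, h3, h4, h5, h6, h7, h8⟩ := hm
    obtain ⟨hsum', h1', h2', h3', h4', h5', h6', h7', h8'⟩ := hm'
    simp only [hF, Prod.mk.injEq] at he
    obtain ⟨⟨ea, eb, ec, ed⟩, ebu, ebv, ebx⟩ := he
    have hu2 : u ^ 2 = u' ^ 2 := ZMod.val_injective q (by exact_mod_cast ea)
    have hv2 : v ^ 2 = v' ^ 2 := ZMod.val_injective q (by exact_mod_cast eb)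
    have hx2 : x ^ 2 = x' ^ 2 := ZMod.val_injective q (by exact_mod_cast ec)
    have hu' : u = u' := sign_recover hodd u u' (hnz u h1) hu2 hq ebu
    have hv' : v = v' := sign_recover hodd v v' (hnz v h3) hv2 hq ebv
    have hx' : x = x' := sign_recover hodd x x' (hnz x h5) hx2 hq ebx
    have hy' : y = y' := by
      subst hu' hv' hx'
      linear_combination hsum' - hsum
    simp [hu', hv', hx', hy']
  have himg : F '' S ⊆ ↑((TT q N) ×ˢ (Finset.univ : Finset (Bool × Bool × Bool))) := by
    rintro _ ⟨⟨u, v, x, y⟩, hm, rfl⟩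
    obtain ⟨hsum, h1, h2, h3, h4, h5, h6, h7, h8⟩ := hm
    simp only [hF]
    dsimp only at hsum h1 h2 h3 h4 h5 h6 h7 h8 ⊢
    simp only [Finset.coe_product, Set.mem_prod, Finset.mem_coe, Finset.coe_univ,
      Set.mem_univ, and_true]
    rw [TT, Finset.mem_filter]
    constructor
    · simp only [Finset.mem_product, boxI, Finset.mem_Ico]
      refine ⟨⟨?_, ?_⟩, ⟨?_, ?_⟩, ⟨?_, ?_⟩, ?_, ?_⟩ <;> push_cast <;> omega
    · -- the divisibility
      rw [← ZMod.intCast_zmod_eq_zero_iff_dvd]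
      unfold Gf Wf kf
      push_cast
      simp only [ZMod.natCast_val, ZMod.cast_id]
      have hh1 : 2*(u*v) - 2*(x*y) = x^2+y^2-u^2-v^2 := by
        linear_combination (u+v+x+y) * hsum
      have hh2 : 4*(u*v)^2 = (2*(x*y) - (u^2+v^2-x^2-y^2))^2 := by
        linear_combination (2*(u*v) + 2*(x*y) - (u^2+v^2-x^2-y^2)) * hh1
      linear_combination (4*(u*v)^2 - (2*(x*y)-(u^2+v^2-x^2-y^2))^2
        - 8*(x*y)*(u^2+v^2-x^2-y^2)) * hh2
  calc S.ncard = (F '' S).ncard := (Set.ncard_image_of_injOn hinj).symm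
    _ ≤ ((TT q N) ×ˢ (Finset.univ : Finset (Bool × Bool × Bool)) : Finset _).card := by
        rw [← Set.ncard_coe_finset]
        exact Set.ncard_le_ncard himg (Finset.finite_toSet _)
    _ = (TT q N).card * 8 := by
        rw [Finset.card_product]
        norm_num
    _ ≤ 8 * (TT q N).card := by omega


/-- Divisor bound: for every `δ > 0` there is `C ≥ 1` with `d(n) ≤ C n^δ`. -/
lemma divisor_bound (δ : ℝ) (hδ : 0 < δ) :
    ∃ C : ℝ, 1 ≤ C ∧ ∀ n : ℕ, n ≠ 0 → (n.divisors.card : ℝ) ≤ C * (n : ℝ) ^ δ := by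
  set x : ℝ := (2 : ℝ) ^ δ - 1 with hx
  have hxpos : 0 < x := by
    have : (1:ℝ) < (2:ℝ) ^ δ := by
      have := Real.rpow_lt_rpow_left_iff (x := (2:ℝ)) (y := 0) (z := δ) one_lt_two
      simpa [Real.rpow_zero] using this.mpr hδ
    simp [hx]; linarith
  set C₀ : ℝ := max 1 (1 / x) with hC0
  have hC0ge1 : (1:ℝ) ≤ C₀ := le_max_left _ _
  have hstep : ∀ a : ℕ, (a + 1 : ℝ) ≤ C₀ * ((2:ℝ) ^ δ) ^ a := by
    intro a
    have hb : (1 : ℝ) + (a : ℝ) * x ≤ (1 + x) ^ a := one_add_mul_le_pow (by linarith) a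
    have h1x : (1 : ℝ) + x = (2:ℝ) ^ δ := by simp [hx]
    have hCx : 1 ≤ C₀ * x := by
      calc (1:ℝ) = (1/x) * x := by field_simp
      _ ≤ C₀ * x := by
        apply mul_le_mul_of_nonneg_right (le_max_right _ _) hxpos.le
    have : (a + 1 : ℝ) ≤ C₀ * (1 + (a:ℝ) * x) := by
      have h2 : C₀ * (1 + (a:ℝ)*x) = C₀ + (a:ℝ) * (C₀ * x) := by ring
      rw [h2]
      have : (a:ℝ) * 1 ≤ (a:ℝ) * (C₀ * x) :=
        mul_le_mul_of_nonneg_left hCx (Nat.cast_nonneg a)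
      push_cast; linarith
    calc (a + 1 : ℝ) ≤ C₀ * (1 + (a:ℝ)*x) := this
    _ ≤ C₀ * (1+x)^a := by
        apply mul_le_mul_of_nonneg_left hb (by linarith)
    _ = C₀ * ((2:ℝ)^δ)^a := by rw [h1x]
  set B : ℕ := ⌈(2:ℝ) ^ (1/δ)⌉₊ with hB
  refine ⟨C₀ ^ B, one_le_pow₀ hC0ge1, ?_⟩
  intro n hn
  -- d(n) = ∏ (a_p + 1)
  rw [Nat.card_divisors hn]
  push_cast
  have hnδ : ((n:ℝ)) ^ δ = ∏ p ∈ n.primeFactors, ((p:ℝ) ^ (n.factorization p : ℕ)) ^ δ := by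
    rw [Real.finset_prod_rpow _ _ (fun i _ => by positivity)]
    congr 1
    have h := Nat.factorization_prod_pow_eq_self hn
    rw [Nat.prod_factorization_eq_prod_primeFactors] at h
    have : ((n:ℝ)) = ∏ p ∈ n.primeFactors, (p:ℝ) ^ (n.factorization p) := by
      exact_mod_cast (congrArg (fun m : ℕ => (m:ℝ)) h).symm
    rw [this]
  -- termwise bound
  have key : ∀ p ∈ n.primeFactors,
      ((n.factorization p : ℝ) + 1) ≤ (if p < B then C₀ else 1) * ((p:ℝ) ^ (n.factorization p : ℕ)) ^ δ := by
    intro p hp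
    have hpp : p.Prime := Nat.prime_of_mem_primeFactors hp
    have hp2 : (2:ℝ) ≤ (p:ℝ) := by exact_mod_cast hpp.two_le
    set a := n.factorization p with ha
    have hppos : (0:ℝ) < p := by linarith
    have hpa : ((p:ℝ) ^ a) ^ δ = ((p:ℝ) ^ δ) ^ a := by
      rw [← Real.rpow_natCast ((p:ℝ)) a, ← Real.rpow_mul hppos.le, mul_comm,
        Real.rpow_mul (by positivity), Real.rpow_natCast]
    rw [hpa]
    by_cases hcase : (2:ℝ) ≤ (p:ℝ) ^ δ
    · -- large prime: a+1 ≤ 2^a ≤ (p^δ)^a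
      have h1 : ((a:ℝ) + 1) ≤ (2:ℝ) ^ a := by
        have := Nat.lt_two_pow_self (n := a)
        have : (a + 1 : ℕ) ≤ 2 ^ a := this
        exact_mod_cast this
      have h2 : (2:ℝ) ^ a ≤ ((p:ℝ)^δ) ^ a := pow_le_pow_left₀ (by norm_num) hcase a
      have : ((a:ℝ)+1) ≤ ((p:ℝ)^δ)^a := le_trans h1 h2
      split
      · calc ((a:ℝ)+1) ≤ ((p:ℝ)^δ)^a := this
          _ ≤ C₀ * ((p:ℝ)^δ)^a := by nlinarith [pow_nonneg (Real.rpow_nonneg hppos.le δ) a]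
      · simpa using this
    · -- small prime: p < B
      push_neg at hcase
      have hsmall : p < B := by
        -- p^δ < 2 → p < 2^(1/δ)
        by_contra hge
        push_neg at hge
        have : (2:ℝ) ^ (1/δ) ≤ (p:ℝ) := le_trans (Nat.le_ceil _) (by exact_mod_cast hge)
        have h2 : ((2:ℝ) ^ (1/δ)) ^ δ ≤ (p:ℝ) ^ δ := Real.rpow_le_rpow (by positivity) this hδ.le
        rw [← Real.rpow_mul (by norm_num), one_div_mul_cancel hδ.ne', Real.rpow_one] at h2
        linarith
      rw [if_pos hsmall]
      have h2 : ((2:ℝ)^δ)^a ≤ ((p:ℝ)^δ)^a := by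
        apply pow_le_pow_left₀ (by positivity)
        exact Real.rpow_le_rpow (by norm_num) hp2 hδ.le
      calc ((a:ℝ)+1) ≤ C₀ * ((2:ℝ)^δ)^a := by simpa [add_comm] using hstep a
        _ ≤ C₀ * ((p:ℝ)^δ)^a := mul_le_mul_of_nonneg_left h2 (by linarith)
  calc (∏ p ∈ n.primeFactors, ((n.factorization p : ℝ) + 1))
      ≤ ∏ p ∈ n.primeFactors, (if p < B then C₀ else 1) * ((p:ℝ) ^ (n.factorization p : ℕ)) ^ δ := by
        apply Finset.prod_le_prod (fun i _ => by positivity) key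
    _ = (∏ p ∈ n.primeFactors, (if p < B then C₀ else 1)) * ∏ p ∈ n.primeFactors, ((p:ℝ) ^ (n.factorization p : ℕ)) ^ δ := by
        rw [Finset.prod_mul_distrib]
    _ ≤ C₀ ^ B * (n:ℝ) ^ δ := by
        rw [← hnδ]
        apply mul_le_mul_of_nonneg_right _ (by positivity)
        calc (∏ p ∈ n.primeFactors, (if p < B then C₀ else 1))
            = ∏ p ∈ n.primeFactors.filter (· < B), C₀ := by
              rw [Finset.prod_filter]
          _ ≤ C₀ ^ B := by
              rw [Finset.prod_const]
              apply pow_le_pow_right₀ hC0ge1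
              calc (n.primeFactors.filter (· < B)).card ≤ (Finset.range B).card := by
                    apply Finset.card_le_card
                    intro p hp
                    simp only [Finset.mem_filter] at hp
                    simpa using hp.2
                _ = B := Finset.card_range B

lemma quad_two {s p c c' : ℤ} (h : c*(s-c) = p) (h' : c'*(s-c') = p) :
    c' = c ∨ c' = s - c := by
  have hz : (c' - c) * (s - c - c') = 0 := by linear_combination h' - h
  rcases mul_eq_zero.mp hz with h0 | h0
  · left; linarith
  · right; linarith

lemma bit_resolve {s c c' : ℤ} (hcc : c' = c ∨ c' = s - c)
    (hb : decide (2*c < s) = decide (2*c' < s)) : c' = c := by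
  rcases hcc with h | h
  · exact h
  · by_cases hlt : 2*c < s
    · rw [decide_eq_true hlt] at hb
      have : 2*c' < s := of_decide_eq_true hb.symm
      omega
    · rw [decide_eq_false hlt] at hb
      have : ¬ (2*c' < s) := of_decide_eq_false hb.symm
      omega

lemma dvd_card_le {P : ℤ} (hP : 0 < P) (S : Finset ℤ)
    (h : ∀ c ∈ S, 0 < c ∧ c ∣ P) : S.card ≤ P.toNat.divisors.card := by
  apply Finset.card_le_card_of_injOn (fun c => c.toNat)
  · intro c hc
    obtain ⟨hc0, hcd⟩ := h c hc
    simp only [Finset.mem_coe]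
    rw [Nat.mem_divisors]
    constructor
    · rw [← Int.natCast_dvd_natCast, Int.toNat_of_nonneg hc0.le, Int.toNat_of_nonneg hP.le]
      exact hcd
    · omega
  · intro c hc c' hc' he
    have h1 := (h c (Finset.mem_coe.mp hc)).1
    have h2 := (h c' (Finset.mem_coe.mp hc')).1
    have : ((c.toNat : ℤ)) = (c'.toNat : ℤ) := by exact_mod_cast he
    rwa [Int.toNat_of_nonneg h1.le, Int.toNat_of_nonneg h2.le] at this

lemma mem_TT {q N : ℕ} {t : ℤ × ℤ × ℤ × ℤ} (ht : t ∈ TT q N) :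
    ((N:ℤ) ≤ t.1 ∧ t.1 < 2*N) ∧ ((N:ℤ) ≤ t.2.1 ∧ t.2.1 < 2*N) ∧
    ((N:ℤ) ≤ t.2.2.1 ∧ t.2.2.1 < 2*N) ∧ ((N:ℤ) ≤ t.2.2.2 ∧ t.2.2.2 < 2*N) ∧
    (q:ℤ) ∣ Gf t := by
  rw [TT, Finset.mem_filter, Finset.mem_product, Finset.mem_product, Finset.mem_product] at ht
  simp only [boxI, Finset.mem_Ico] at ht
  tauto

lemma card_boxI (N : ℕ) : (boxI N).card = N := by
  rw [boxI, Int.card_Ico]; omega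

lemma stepB0 (q N : ℕ) (hq : q.Prime) (hodd : Odd q) (hNq : N^2 ≤ q) :
    ((TT q N).filter (fun t => kf t = 0)).card ≤ 10 * N^2 := by
  classical
  have hq0 : (0:ℤ) < q := by exact_mod_cast hq.pos
  have unpack : ∀ t ∈ (TT q N).filter (fun t => kf t = 0),
      ((N:ℤ) ≤ t.1 ∧ t.1 < 2*N) ∧ ((N:ℤ) ≤ t.2.1 ∧ t.2.1 < 2*N) ∧
      ((N:ℤ) ≤ t.2.2.1 ∧ t.2.2.1 < 2*N) ∧ ((N:ℤ) ≤ t.2.2.2 ∧ t.2.2.2 < 2*N) ∧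
      t.1 + t.2.1 - t.2.2.1 - t.2.2.2 = 0 ∧
      (q:ℤ) ∣ (t.2.2.1*t.2.2.2 - t.1*t.2.1) := by
    intro t ht
    rw [Finset.mem_filter] at ht
    obtain ⟨htT, hk0⟩ := ht
    obtain ⟨hA, hB, hC, hD, hdvd⟩ := mem_TT htT
    rw [kf] at hk0
    refine ⟨hA, hB, hC, hD, hk0, ?_⟩
    have hG : Gf t = 16*(t.2.2.1*t.2.2.2 - t.1*t.2.1)^2 := by
      rw [Gf, Wf, kf]; rw [hk0]; ring
    rw [hG] at hdvd
    have hqI : Prime (q:ℤ) := Nat.prime_iff_prime_int.mp hq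
    have h16 : ¬ ((q:ℤ) ∣ 16) := by
      intro hdq
      have h16' : q ∣ 16 := by exact_mod_cast hdq
      have h2 : q ∣ 2 := hq.dvd_of_dvd_pow (show q ∣ 2^4 by norm_num at h16' ⊢; exact h16')
      have hq2 : q = 2 := (Nat.prime_dvd_prime_iff_eq hq Nat.prime_two).mp h2
      rw [hq2] at hodd
      exact absurd hodd (by decide)
    rcases hqI.dvd_mul.mp hdvd with h | h
    · exact absurd h h16
    · exact hqI.dvd_of_dvd_pow h
  apply le_trans (Finset.card_le_card_of_injOn
    (f := fun t : ℤ × ℤ × ℤ × ℤ =>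
      (t.1, t.2.1, (t.2.2.1*t.2.2.2 - t.1*t.2.1)/(q:ℤ),
        decide (2*t.2.2.1 < t.1 + t.2.1)))
    (t := boxI N ×ˢ boxI N ×ˢ Finset.Icc (-2:ℤ) 2 ×ˢ (Finset.univ : Finset Bool))
    ?_ ?_)
  · -- card of target
    apply le_of_eq
    rw [Finset.card_product, Finset.card_product, Finset.card_product,
      card_boxI, Int.card_Icc, Finset.card_univ]
    norm_num
    rw [show Int.toNat 5 = 5 from rfl]
    ring
  · -- membership
    intro t ht
    obtain ⟨hA, hB, hC, hD, hk0, hdvd⟩ := unpack t ht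
    simp only [Finset.mem_coe, Finset.mem_product, boxI, Finset.mem_Ico, Finset.mem_Icc, Finset.mem_univ,
      and_true]
    refine ⟨⟨hA.1, hA.2⟩, ⟨hB.1, hB.2⟩, ?_⟩
    · -- bounds on j
      set j := (t.2.2.1*t.2.2.2 - t.1*t.2.1)/(q:ℤ) with hj
      have hjq : (q:ℤ) * j = t.2.2.1*t.2.2.2 - t.1*t.2.1 := Int.mul_ediv_cancel' hdvd
      have hcd : t.2.2.1*t.2.2.2 < 4*(N:ℤ)^2 := by nlinarith
      have hcd2 : (N:ℤ)^2 ≤ t.2.2.1*t.2.2.2 := by nlinarith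
      have hab : t.1*t.2.1 < 4*(N:ℤ)^2 := by nlinarith
      have hab2 : (N:ℤ)^2 ≤ t.1*t.2.1 := by nlinarith
      have hNq' : (N:ℤ)^2 ≤ (q:ℤ) := by exact_mod_cast hNq
      have hup : (q:ℤ) * j < (q:ℤ) * 3 := by nlinarith
      have hlo : (q:ℤ) * (-3) < (q:ℤ) * j := by nlinarith
      have h1 : j < 3 := lt_of_mul_lt_mul_left hup hq0.le
      have h2 : -3 < j := lt_of_mul_lt_mul_left hlo hq0.le
      omega
  · -- injectivity
    intro t ht t' ht' he
    obtain ⟨hA, hB, hC, hD, hk0, hdvd⟩ := unpack t (Finset.mem_coe.mp ht)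
    obtain ⟨hA', hB', hC', hD', hk0', hdvd'⟩ := unpack t' (Finset.mem_coe.mp ht')
    obtain ⟨a, b, c, d⟩ := t
    obtain ⟨a', b', c', d'⟩ := t'
    simp only [Prod.mk.injEq] at he ⊢
    obtain ⟨e1, e2, e3, e4⟩ := he
    dsimp only at *
    subst e1 e2
    have hjq : (q:ℤ) * ((c*d - a*b)/(q:ℤ)) = c*d - a*b := Int.mul_ediv_cancel' hdvd
    have hjq' : (q:ℤ) * ((c'*d' - a*b)/(q:ℤ)) = c'*d' - a*b := Int.mul_ediv_cancel' hdvd'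
    have hcd : c*d = c'*d' := by rw [e3] at hjq; linarith [hjq, hjq']
    have hsum : c + d = a + b := by linarith
    have hsum' : c' + d' = a + b := by linarith
    have hq1 : c * ((a+b) - c) = c*d := by rw [show (a+b) - c = d by linarith]
    have hq2 : c' * ((a+b) - c') = c*d := by
      rw [show (a+b) - c' = d' by linarith, hcd]
    have hcc : c' = c := bit_resolve (quad_two hq1 hq2)
      (by rw [show a + b = a + b from rfl] at e4; exact e4)
    refine ⟨rfl, rfl, hcc.symm, by linarith⟩

lemma sign_bit_resolve {W W' : ℤ} (h : W' = W ∨ W' = -W)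
    (hb : decide (0 ≤ W) = decide (0 ≤ W')) : W' = W := by
  rcases h with h | h
  · exact h
  · by_cases h0 : 0 ≤ W
    · rw [decide_eq_true h0] at hb
      have := of_decide_eq_true hb.symm
      omega
    · rw [decide_eq_false h0] at hb
      have := of_decide_eq_false hb.symm
      omega

lemma int_abs_bit {k k' : ℤ} (h : k.natAbs = k'.natAbs)
    (hb : decide (0 ≤ k) = decide (0 ≤ k')) : k = k' := by
  by_cases h0 : 0 ≤ k
  · rw [decide_eq_true h0] at hb
    have := of_decide_eq_true hb.symm
    omega
  · rw [decide_eq_false h0] at hb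
    have := of_decide_eq_false hb.symm
    omega

lemma ab_recover {a b a' b' s p : ℤ} (hs : a + b = s) (hs' : a' + b' = s)
    (hp : a*b = p) (hp' : a'*b' = p)
    (hbit : decide (2*a < a+b) = decide (2*a' < a'+b')) : a = a' ∧ b = b' := by
  have h1 : a * (s - a) = p := by rw [← hs]; ring_nf; linear_combination hp
  have h2 : a' * (s - a') = p := by rw [← hs']; ring_nf; linear_combination hp'
  rw [hs, hs'] at hbit
  have := bit_resolve (quad_two h1 h2) hbit
  exact ⟨this.symm, by omega⟩

lemma sq_eq_pm {W W' : ℤ} (h : W'^2 = W^2) : W' = W ∨ W' = -W := by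
  have : (W' - W) * (W' + W) = 0 := by linear_combination h
  rcases mul_eq_zero.mp this with h0 | h0
  · left; omega
  · right; omega

lemma sq_eq_of_sqrt_eq {x y : ℤ} (hx : IsSquare x) (hy : IsSquare y)
    (h : Int.sqrt x = Int.sqrt y) : x = y := by
  obtain ⟨s, rfl⟩ := hx
  obtain ⟨r, rfl⟩ := hy
  rw [Int.sqrt_eq, Int.sqrt_eq] at h
  have h2 : s.natAbs = r.natAbs := by exact_mod_cast h
  rw [← Int.natAbs_mul_self, h2, Int.natAbs_mul_self]

set_option maxHeartbeats 1000000 in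
lemma stepB1 (q N D : ℕ) (hN : 1 ≤ N)
    (hD : ∀ m : ℕ, m ≠ 0 → m ≤ 1056*N^4 → m.divisors.card ≤ D) :
    ((TT q N).filter (fun t => kf t ≠ 0 ∧ Gf t = 0)).card
      ≤ 4 * ((D * N) * (4*N+1)) := by
  classical
  set S₁ := (TT q N).filter (fun t => kf t ≠ 0 ∧ Gf t = 0) with hS₁
  have hmem : ∀ t ∈ S₁, ((N:ℤ) ≤ t.1 ∧ t.1 < 2*N) ∧ ((N:ℤ) ≤ t.2.1 ∧ t.2.1 < 2*N) ∧
      ((N:ℤ) ≤ t.2.2.1 ∧ t.2.2.1 < 2*N) ∧ ((N:ℤ) ≤ t.2.2.2 ∧ t.2.2.2 < 2*N) ∧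
      kf t ≠ 0 ∧ Gf t = 0 := by
    intro t ht
    rw [hS₁, Finset.mem_filter] at ht
    obtain ⟨hT, h1, h2⟩ := ht
    obtain ⟨hA, hB, hC, hD', _⟩ := mem_TT hT
    exact ⟨hA, hB, hC, hD', h1, h2⟩
  set f₁ : ℤ × ℤ × ℤ × ℤ → (ℤ × ℤ) × ℤ := fun t => ((t.2.2.1, t.2.2.2), kf t) with hf₁
  have stage1 : S₁.card ≤ 4 * (S₁.image f₁).card := by
    apply Finset.card_le_mul_card_image
    intro b hb
    apply le_trans (Finset.card_le_card_of_injOn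
      (f := fun t => (decide (0 ≤ Wf t), decide (2*t.1 < t.1 + t.2.1)))
      (t := (Finset.univ : Finset (Bool × Bool))) (fun _ _ => Finset.mem_univ _) ?_)
    · simp
    · intro t ht t' ht' he
      simp only [Finset.coe_filter, Set.mem_setOf_eq] at ht ht'
      obtain ⟨ht1, hfb⟩ := ht
      obtain ⟨ht1', hfb'⟩ := ht'
      obtain ⟨_, _, _, _, hk0, hG0⟩ := hmem t ht1
      obtain ⟨_, _, _, _, hk0', hG0'⟩ := hmem t' ht1'
      rw [← hfb'] at hfb
      simp only [hf₁, Prod.mk.injEq] at hfb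
      obtain ⟨⟨ec, ed⟩, ek⟩ := hfb
      simp only [Prod.mk.injEq] at he
      obtain ⟨ebW, eba⟩ := he
      have hW2 : (Wf t')^2 = (Wf t)^2 := by
        rw [Gf] at hG0 hG0'
        rw [ek, ec, ed] at hG0
        linarith
      have hWW : Wf t' = Wf t := sign_bit_resolve (sq_eq_pm hW2) ebW
      have hab : t.1 * t.2.1 = t'.1 * t'.2.1 := by
        have e1 : Wf t = (kf t)^2 + 4*(t.2.2.1*t.2.2.2) - 4*(t.1*t.2.1) := by rw [Wf]
        have e2 : Wf t' = (kf t')^2 + 4*(t'.2.2.1*t'.2.2.2) - 4*(t'.1*t'.2.1) := by rw [Wf]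
        rw [ek, ec, ed] at e1
        rw [hWW] at e2
        linarith
      have hsum : t.1 + t.2.1 = t'.1 + t'.2.1 := by
        have e1 : kf t = t.1 + t.2.1 - t.2.2.1 - t.2.2.2 := by rw [kf]
        have e2 : kf t' = t'.1 + t'.2.1 - t'.2.2.1 - t'.2.2.2 := by rw [kf]
        rw [ek, ec, ed] at e1
        rw [e2] at e1
        linarith
      have hrec := ab_recover (a := t.1) (b := t.2.1) (a' := t'.1) (b' := t'.2.1)
        (s := t'.1 + t'.2.1) hsum rfl hab rfl eba
      obtain ⟨u1, u2, u3, u4⟩ := t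
      obtain ⟨u1', u2', u3', u4'⟩ := t'
      simp only at hrec ec ed
      simp [Prod.ext_iff, hrec.1, hrec.2, ec, ed]
  set SqP := (boxI N ×ˢ boxI N).filter (fun p : ℤ × ℤ => IsSquare (p.1*p.2)) with hSqP
  have hmemSqP : ∀ p ∈ SqP, ((N:ℤ) ≤ p.1 ∧ p.1 < 2*N) ∧ ((N:ℤ) ≤ p.2 ∧ p.2 < 2*N) ∧
      IsSquare (p.1*p.2) := by
    intro p hp
    rw [hSqP, Finset.mem_filter, Finset.mem_product] at hp
    simp only [boxI, Finset.mem_Ico] at hp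
    tauto
  have hSqPcard : SqP.card ≤ D * N := by
    have hfiber : ∀ v ∈ SqP.image (fun p : ℤ × ℤ => Int.sqrt (p.1*p.2)),
        (SqP.filter (fun p => Int.sqrt (p.1*p.2) = v)).card ≤ D := by
      intro v hv
      rw [Finset.mem_image] at hv
      obtain ⟨p₀, hp₀, rfl⟩ := hv
      obtain ⟨hpa, hpb, hsq₀⟩ := hmemSqP p₀ hp₀
      set P : ℤ := p₀.1 * p₀.2 with hP
      have hPpos : 0 < P := by nlinarith [hpa.1, hpb.1]
      have hPle : P ≤ 4*(N:ℤ)^2 := by nlinarith [hpa.2, hpb.2, hpa.1, hpb.1]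
      have hPval : ∀ p ∈ SqP.filter (fun p => Int.sqrt (p.1*p.2) = Int.sqrt P),
          p.1 * p.2 = P := by
        intro p hp
        rw [Finset.mem_filter] at hp
        obtain ⟨hp1, hp2⟩ := hp
        exact sq_eq_of_sqrt_eq (hmemSqP p hp1).2.2 hsq₀ hp2
      apply le_trans (Finset.card_le_card_of_injOn
        (f := fun p : ℤ × ℤ => p.1.toNat) (t := P.toNat.divisors) ?_ ?_)
      · apply hD
        · omega
        · have h1 : P.toNat ≤ 4*N^2 := by
            have : ((4*N^2 : ℕ) : ℤ) = 4*(N:ℤ)^2 := by push_cast; ring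
            omega
          have h2 : N^2 ≤ N^4 := Nat.pow_le_pow_right hN (by norm_num)
          omega
      · intro p hp
        have hPe := hPval p hp
        rw [Finset.mem_coe, Finset.mem_filter] at hp
        obtain ⟨hq1, _⟩ := hmemSqP p hp.1
        simp only [Finset.mem_coe]
        rw [Nat.mem_divisors]
        constructor
        · rw [← Int.natCast_dvd_natCast, Int.toNat_of_nonneg (by omega),
            Int.toNat_of_nonneg hPpos.le]
          exact ⟨p.2, hPe.symm⟩
        · omega
      · intro p hp p' hp' he
        have hp0 := Finset.mem_coe.mp hp
        have hp0' := Finset.mem_coe.mp hp'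
        have hPe := hPval p hp0
        have hPe' := hPval p' hp0'
        rw [Finset.mem_filter] at hp0 hp0'
        obtain ⟨hq1, _⟩ := hmemSqP p hp0.1
        obtain ⟨hq1', _⟩ := hmemSqP p' hp0'.1
        have h1 : p.1 = p'.1 := by
          have : (p.1.toNat : ℤ) = (p'.1.toNat : ℤ) := by exact_mod_cast he
          rwa [Int.toNat_of_nonneg (by omega), Int.toNat_of_nonneg (by omega)] at this
        have h2 : p.2 = p'.2 := by
          rw [← hPe'] at hPe
          rw [h1] at hPe
          exact mul_left_cancel₀ (by omega) hPe
        exact Prod.ext h1 h2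
    have himg : (SqP.image (fun p : ℤ × ℤ => Int.sqrt (p.1*p.2))).card ≤ N := by
      have hsub : SqP.image (fun p : ℤ × ℤ => Int.sqrt (p.1*p.2)) ⊆
          Finset.Ico (N:ℤ) (2*N) := by
        intro v hv
        rw [Finset.mem_image] at hv
        obtain ⟨p, hp, rfl⟩ := hv
        obtain ⟨hpa, hpb, r, hr⟩ := hmemSqP p hp
        have hrv : Int.sqrt (p.1*p.2) = (r.natAbs : ℤ) := by rw [hr, Int.sqrt_eq]
        have hrsq : ((r.natAbs : ℤ))*((r.natAbs : ℤ)) = p.1*p.2 := by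
          push_cast
          rw [abs_mul_abs_self]
          exact hr.symm
        rw [Finset.mem_Ico, hrv]
        have hnn : (0:ℤ) ≤ (r.natAbs : ℤ) := by positivity
        constructor
        · nlinarith [hpa.1, hpb.1, hpa.2, hpb.2]
        · nlinarith [hpa.1, hpb.1, hpa.2, hpb.2]
      calc (SqP.image (fun p : ℤ × ℤ => Int.sqrt (p.1*p.2))).card
          ≤ (Finset.Ico (N:ℤ) (2*N)).card := Finset.card_le_card hsub
        _ = N := card_boxI N
    calc SqP.card ≤ D * (SqP.image (fun p : ℤ × ℤ => Int.sqrt (p.1*p.2))).card :=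
          Finset.card_le_mul_card_image _ D hfiber
      _ ≤ D * N := Nat.mul_le_mul_left D himg
  have hIcc : (Finset.Icc (-(2*(N:ℤ))) (2*N)).card = 4*N+1 := by
    rw [Int.card_Icc]; omega
  have hsub2 : S₁.image f₁ ⊆ SqP ×ˢ Finset.Icc (-(2*(N:ℤ))) (2*N) := by
    intro b hb
    rw [Finset.mem_image] at hb
    obtain ⟨t, ht, rfl⟩ := hb
    obtain ⟨hA, hB, hC, hD', hk0, hG0⟩ := hmem t ht
    rw [Finset.mem_product]
    constructor
    · rw [hSqP, Finset.mem_filter, Finset.mem_product]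
      simp only [boxI, Finset.mem_Ico, hf₁]
      refine ⟨⟨⟨hC.1, hC.2⟩, hD'.1, hD'.2⟩, ?_⟩
      rw [Gf] at hG0
      have hsq : (Wf t)^2 = (4*kf t)^2 * (t.2.2.1*t.2.2.2) := by linarith
      have hdvd : (4*kf t) ∣ Wf t := by
        rw [← Int.pow_dvd_pow_iff (b := Wf t) (n := 2) (by norm_num)]
        exact ⟨t.2.2.1*t.2.2.2, hsq⟩
      obtain ⟨r, hr⟩ := hdvd
      refine ⟨r, ?_⟩
      have h16 : (4*kf t)^2 ≠ 0 := by
        intro h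
        exact hk0 (by nlinarith [sq_nonneg (kf t)])
      apply mul_left_cancel₀ h16
      rw [← hsq, hr]
      ring
    · simp only [hf₁, Finset.mem_Icc, kf]
      constructor <;> omega
  have stage2 : (S₁.image f₁).card ≤ (D * N) * (4*N+1) := by
    calc (S₁.image f₁).card ≤ (SqP ×ˢ Finset.Icc (-(2*(N:ℤ))) (2*N)).card :=
          Finset.card_le_card hsub2
      _ = SqP.card * (4*N+1) := by rw [Finset.card_product, hIcc]
      _ ≤ (D * N) * (4*N+1) := Nat.mul_le_mul_right _ hSqPcard
  calc S₁.card ≤ 4 * (S₁.image f₁).card := stage1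
    _ ≤ 4 * ((D * N) * (4*N+1)) := Nat.mul_le_mul_left 4 stage2

set_option maxHeartbeats 1600000 in
lemma stepB2 (q N D : ℕ) (hq : q.Prime) (hN : 1 ≤ N)
    (hD : ∀ m : ℕ, m ≠ 0 → m ≤ 1056*N^4 → m.divisors.card ≤ D) :
    ((TT q N).filter (fun t => kf t ≠ 0 ∧ Gf t ≠ 0)).card
      ≤ (2*D) * ((2*D) * ((2*(656*N^4/q)) * (40*N^2+1))) := by
  classical
  have hq0 : (0:ℤ) < q := by exact_mod_cast hq.pos
  set S₂ := (TT q N).filter (fun t => kf t ≠ 0 ∧ Gf t ≠ 0) with hS₂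
  have hmem : ∀ t ∈ S₂, ((N:ℤ) ≤ t.1 ∧ t.1 < 2*N) ∧ ((N:ℤ) ≤ t.2.1 ∧ t.2.1 < 2*N) ∧
      ((N:ℤ) ≤ t.2.2.1 ∧ t.2.2.1 < 2*N) ∧ ((N:ℤ) ≤ t.2.2.2 ∧ t.2.2.2 < 2*N) ∧
      (q:ℤ) ∣ Gf t ∧ kf t ≠ 0 ∧ Gf t ≠ 0 := by
    intro t ht
    rw [hS₂, Finset.mem_filter] at ht
    obtain ⟨hT, h1, h2⟩ := ht
    obtain ⟨hA, hB, hC, hD', hdvd⟩ := mem_TT hT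
    exact ⟨hA, hB, hC, hD', hdvd, h1, h2⟩
  -- basic bounds
  have hkbound : ∀ t ∈ S₂, (kf t)^2 ≤ 4*(N:ℤ)^2 ∧ (N:ℤ)^2 ≤ t.2.2.1*t.2.2.2 ∧
      t.2.2.1*t.2.2.2 ≤ 4*(N:ℤ)^2 ∧ -(20*(N:ℤ)^2) ≤ Wf t ∧ Wf t ≤ 20*(N:ℤ)^2 ∧
      -(656*(N:ℤ)^4) ≤ Gf t ∧ Gf t ≤ 656*(N:ℤ)^4 := by
    intro t ht
    obtain ⟨hA, hB, hC, hD', _, hk0, _⟩ := hmem t ht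
    have hk : (kf t)^2 ≤ 4*(N:ℤ)^2 := by
      rw [kf]
      nlinarith [hA.1, hA.2, hB.1, hB.2, hC.1, hC.2, hD'.1, hD'.2]
    have hcd1 : (N:ℤ)^2 ≤ t.2.2.1*t.2.2.2 := by nlinarith [hC.1, hD'.1]
    have hcd2 : t.2.2.1*t.2.2.2 ≤ 4*(N:ℤ)^2 := by nlinarith [hC.1, hC.2, hD'.1, hD'.2]
    have hab1 : (N:ℤ)^2 ≤ t.1*t.2.1 := by nlinarith [hA.1, hB.1]
    have hab2 : t.1*t.2.1 ≤ 4*(N:ℤ)^2 := by nlinarith [hA.1, hA.2, hB.1, hB.2]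
    have hW1 : -(20*(N:ℤ)^2) ≤ Wf t := by
      rw [Wf]; nlinarith [sq_nonneg (kf t)]
    have hW2 : Wf t ≤ 20*(N:ℤ)^2 := by
      rw [Wf]; nlinarith [hk, sq_nonneg (kf t)]
    have hG1 : -(656*(N:ℤ)^4) ≤ Gf t := by
      rw [Gf]
      nlinarith [sq_nonneg (Wf t), hk, hcd1, hcd2, sq_nonneg (kf t), sq_nonneg ((N:ℤ))]
    have hG2 : Gf t ≤ 656*(N:ℤ)^4 := by
      rw [Gf]
      nlinarith [hW1, hW2, hk, hcd1, sq_nonneg (kf t), sq_nonneg ((N:ℤ))]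
    exact ⟨hk, hcd1, hcd2, hW1, hW2, hG1, hG2⟩
  set f₂ : ℤ × ℤ × ℤ × ℤ → ℤ × ℤ × ℤ := fun t => (Gf t / (q:ℤ), Wf t, kf t) with hf₂
  -- Stage 1 : fibers of f₂ have ≤ 2D elements
  have stage1 : S₂.card ≤ (2*D) * (S₂.image f₂).card := by
    apply Finset.card_le_mul_card_image
    intro b hb
    rw [Finset.mem_image] at hb
    obtain ⟨t₀, ht₀, rfl⟩ := hb
    obtain ⟨hA₀, hB₀, hC₀, hD₀, hdvd₀, hk₀, hG₀⟩ := hmem t₀ ht₀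
    set P : ℤ := t₀.2.2.1 * t₀.2.2.2 with hP
    have hPpos : 0 < P := by nlinarith [hC₀.1, hD₀.1]
    -- all fiber elements have the same c*d
    have hsame : ∀ t ∈ S₂.filter (fun t => f₂ t = f₂ t₀),
        t.2.2.1 * t.2.2.2 = P ∧ t.1 * t.2.1 = t₀.1 * t₀.2.1 ∧
        kf t = kf t₀ ∧ Wf t = Wf t₀ := by
      intro t ht
      rw [Finset.mem_filter] at ht
      obtain ⟨htS, hfb⟩ := ht
      obtain ⟨_, _, _, _, hdvd, hk0, hG0⟩ := hmem t htS
      simp only [hf₂, Prod.mk.injEq] at hfb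
      obtain ⟨em, eW, ek⟩ := hfb
      have hGeq : Gf t = Gf t₀ := by
        have h1 := Int.ediv_mul_cancel hdvd
        have h2 := Int.ediv_mul_cancel hdvd₀
        rw [← h1, ← h2, em]
      have hcd : t.2.2.1 * t.2.2.2 = P := by
        have e1 : Gf t = (Wf t)^2 - 16*(kf t)^2*(t.2.2.1*t.2.2.2) := by rw [Gf]
        have e2 : Gf t₀ = (Wf t₀)^2 - 16*(kf t₀)^2*(t₀.2.2.1*t₀.2.2.2) := by rw [Gf]
        rw [hGeq, e2, eW, ek] at e1
        have hkk : (16:ℤ)*(kf t₀)^2 ≠ 0 := by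
          intro h
          apply hk₀
          nlinarith [sq_nonneg (kf t₀)]
        have := e1
        have h3 : (16:ℤ)*(kf t₀)^2*(t.2.2.1*t.2.2.2) = 16*(kf t₀)^2*P := by
          rw [hP]; linarith
        exact mul_left_cancel₀ hkk h3
      have hab : t.1 * t.2.1 = t₀.1 * t₀.2.1 := by
        have e1 : Wf t = (kf t)^2 + 4*(t.2.2.1*t.2.2.2) - 4*(t.1*t.2.1) := by rw [Wf]
        have e2 : Wf t₀ = (kf t₀)^2 + 4*(t₀.2.2.1*t₀.2.2.2) - 4*(t₀.1*t₀.2.1) := by rw [Wf]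
        rw [eW, ek, hcd] at e1
        rw [e2] at e1
        linarith
      exact ⟨hcd, hab, ek, eW⟩
    apply le_trans (Finset.card_le_card_of_injOn
      (f := fun t => (t.2.2.1.toNat, decide (2*t.1 < t.1 + t.2.1)))
      (t := P.toNat.divisors ×ˢ (Finset.univ : Finset Bool)) ?_ ?_)
    · rw [Finset.card_product]
      have : P.toNat.divisors.card ≤ D := by
        apply hD
        · omega
        · have hPle : P ≤ 4*(N:ℤ)^2 := by nlinarith [hC₀.2, hD₀.2, hC₀.1, hD₀.1]
          have h1 : P.toNat ≤ 4*N^2 := by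
            have : ((4*N^2 : ℕ) : ℤ) = 4*(N:ℤ)^2 := by push_cast; ring
            omega
          have h2 : N^2 ≤ N^4 := Nat.pow_le_pow_right hN (by norm_num)
          omega
      simp only [Finset.card_univ, Fintype.card_bool]
      omega
    · intro t ht
      rw [Finset.mem_coe, Finset.mem_filter] at ht
      obtain ⟨hcd, _, _, _⟩ := hsame t (by rw [Finset.mem_filter]; exact ht)
      obtain ⟨htS, _⟩ := ht
      obtain ⟨_, _, hC, _, _, _, _⟩ := hmem t htS
      simp only [Finset.mem_coe]
      rw [Finset.mem_product, Nat.mem_divisors]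
      refine ⟨⟨?_, by omega⟩, Finset.mem_univ _⟩
      rw [← Int.natCast_dvd_natCast, Int.toNat_of_nonneg (by omega),
        Int.toNat_of_nonneg hPpos.le]
      exact ⟨t.2.2.2, hcd.symm⟩
    · intro t ht t' ht' he
      have ht0 := Finset.mem_coe.mp ht
      have ht0' := Finset.mem_coe.mp ht'
      obtain ⟨hcd, hab, ek, eW⟩ := hsame t ht0
      obtain ⟨hcd', hab', ek', eW'⟩ := hsame t' ht0'
      rw [Finset.mem_filter] at ht0 ht0'
      obtain ⟨_, _, hC, _, _, _, _⟩ := hmem t ht0.1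
      obtain ⟨_, _, hC', _, _, _, _⟩ := hmem t' ht0'.1
      simp only [Prod.mk.injEq] at he
      obtain ⟨ec, ebit⟩ := he
      have hc : t.2.2.1 = t'.2.2.1 := by
        have : (t.2.2.1.toNat : ℤ) = (t'.2.2.1.toNat : ℤ) := by exact_mod_cast ec
        rwa [Int.toNat_of_nonneg (by omega), Int.toNat_of_nonneg (by omega)] at this
      have hd : t.2.2.2 = t'.2.2.2 := by
        rw [← hcd'] at hcd
        rw [hc] at hcd
        exact mul_left_cancel₀ (by omega) hcd
      have hsum : t.1 + t.2.1 = t'.1 + t'.2.1 := by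
        have e1 : kf t = t.1 + t.2.1 - t.2.2.1 - t.2.2.2 := by rw [kf]
        have e2 : kf t' = t'.1 + t'.2.1 - t'.2.2.1 - t'.2.2.2 := by rw [kf]
        rw [ek, ← ek', e2] at e1
        rw [hc, hd] at e1
        linarith
      have habe : t.1 * t.2.1 = t'.1 * t'.2.1 := by rw [hab, hab']
      have hrec := ab_recover (a := t.1) (b := t.2.1) (a' := t'.1) (b' := t'.2.1)
        (s := t'.1 + t'.2.1) hsum rfl habe rfl ebit
      obtain ⟨u1, u2, u3, u4⟩ := t
      obtain ⟨u1', u2', u3', u4'⟩ := t'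
      simp only at hrec hc hd
      simp [Prod.ext_iff, hrec.1, hrec.2, hc, hd]
  -- Stage 2 : project away k
  set g₂ : ℤ × ℤ × ℤ → ℤ × ℤ := fun b => (b.1, b.2.1) with hg₂
  have stage2 : (S₂.image f₂).card ≤ (2*D) * ((S₂.image f₂).image g₂).card := by
    apply Finset.card_le_mul_card_image
    intro b hb
    rw [Finset.mem_image] at hb
    obtain ⟨b₀, hb₀, rfl⟩ := hb
    rw [Finset.mem_image] at hb₀
    obtain ⟨t₀, ht₀, rfl⟩ := hb₀
    -- n := W² - q·m = 16 k² c d > 0 for every fiber element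
    set n : ℤ := (Wf t₀)^2 - (q:ℤ) * (Gf t₀ / (q:ℤ)) with hn
    have hmemn : ∀ b ∈ (S₂.image f₂).filter (fun b => g₂ b = g₂ (f₂ t₀)),
        b.2.2 ≠ 0 ∧ b.2.2 ∣ n ∧ 0 < n ∧ n ≤ 256*(N:ℤ)^4 := by
      intro b hb
      rw [Finset.mem_filter, Finset.mem_image] at hb
      obtain ⟨⟨t, htS, rfl⟩, hgb⟩ := hb
      obtain ⟨hA, hB, hC, hD', hdvd, hk0, hG0⟩ := hmem t htS
      simp only [hg₂, hf₂, Prod.mk.injEq] at hgb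
      obtain ⟨em, eW⟩ := hgb
      have hGq : (q:ℤ) * (Gf t / (q:ℤ)) = Gf t := Int.mul_ediv_cancel' hdvd
      have hne : n = 16*(kf t)^2*(t.2.2.1*t.2.2.2) := by
        rw [hn, ← em, ← eW, mul_comm ((q:ℤ)) _]
        rw [Int.ediv_mul_cancel hdvd]
        rw [Gf]; ring
      have hcd1 : (N:ℤ)^2 ≤ t.2.2.1*t.2.2.2 := by nlinarith [hC.1, hD'.1]
      have hcd2 : t.2.2.1*t.2.2.2 ≤ 4*(N:ℤ)^2 := by nlinarith [hC.1, hC.2, hD'.1, hD'.2]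
      have hksq : (1:ℤ) ≤ (kf t)^2 := by
        rcases lt_or_gt_of_ne hk0 with h | h <;> nlinarith
      have hk4 : (kf t)^2 ≤ 4*(N:ℤ)^2 := by
        rw [kf]
        nlinarith [hA.1, hA.2, hB.1, hB.2, hC.1, hC.2, hD'.1, hD'.2]
      refine ⟨hk0, ?_, ?_, ?_⟩
      · rw [hne]
        exact ⟨16*(kf t)*(t.2.2.1*t.2.2.2), by ring⟩
      · rw [hne]; nlinarith
      · rw [hne]; nlinarith [sq_nonneg ((N:ℤ)^2)]
    apply le_trans (Finset.card_le_card_of_injOn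
      (f := fun b : ℤ × ℤ × ℤ => (b.2.2.natAbs, decide (0 ≤ b.2.2)))
      (t := n.toNat.divisors ×ˢ (Finset.univ : Finset Bool)) ?_ ?_)
    · rw [Finset.card_product]
      simp only [Finset.card_univ, Fintype.card_bool]
      have hone : ∃ b ∈ (S₂.image f₂).filter (fun b => g₂ b = g₂ (f₂ t₀)), True := by
        refine ⟨f₂ t₀, ?_, trivial⟩
        rw [Finset.mem_filter, Finset.mem_image]
        exact ⟨⟨t₀, ht₀, rfl⟩, rfl⟩
      obtain ⟨b₁, hb₁, _⟩ := hone
      obtain ⟨_, _, hnpos, hnle⟩ := hmemn b₁ hb₁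
      have : n.toNat.divisors.card ≤ D := by
        apply hD
        · omega
        · have h1 : ((256*N^4 : ℕ) : ℤ) = 256*(N:ℤ)^4 := by push_cast; ring
          omega
      omega
    · intro b hb
      obtain ⟨hk0, hdvdn, hnpos, _⟩ := hmemn b hb
      simp only [Finset.mem_coe]
      rw [Finset.mem_product, Nat.mem_divisors]
      refine ⟨⟨?_, by omega⟩, Finset.mem_univ _⟩
      have htn : n.toNat = n.natAbs := by omega
      rw [htn]
      exact Int.natAbs_dvd_natAbs.mpr hdvdn
    · intro b hb b' hb' he
      simp only [Prod.mk.injEq] at he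
      obtain ⟨eabs, ebit⟩ := he
      have hb0 := Finset.mem_coe.mp hb
      have hb0' := Finset.mem_coe.mp hb'
      rw [Finset.mem_filter] at hb0 hb0'
      obtain ⟨_, hg⟩ := hb0
      obtain ⟨_, hg'⟩ := hb0'
      have hk : b.2.2 = b'.2.2 := int_abs_bit eabs ebit
      simp only [hg₂, Prod.mk.injEq] at hg hg'
      obtain ⟨u1, u2, u3⟩ := b
      obtain ⟨u1', u2', u3'⟩ := b'
      simp only at hg hg' hk
      simp [Prod.ext_iff, hk, hg.1, hg.2, hg'.1, hg'.2]
  -- Stage 3 : the (m, W) image is small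
  set M : ℕ := 656*N^4/q with hM
  have hMprop : ∀ x : ℕ, x*q ≤ 656*N^4 → x ≤ M := by
    intro x hx
    rw [hM]
    exact (Nat.le_div_iff_mul_le hq.pos).mpr hx
  clear_value M
  clear hM
  have hcastN2 : ((N:ℤ))^2 = ((N^2 : ℕ) : ℤ) := by push_cast; ring
  have hcastN4 : ((N:ℤ))^4 = ((N^4 : ℕ) : ℤ) := by push_cast; ring
  have stage3 : ((S₂.image f₂).image g₂).card ≤ (2*M) * (40*N^2+1) := by
    have hsub : (S₂.image f₂).image g₂ ⊆
        ((Finset.Icc (-(M:ℤ)) M).erase 0) ×ˢ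
          Finset.Icc (-(20*((N^2:ℕ):ℤ))) (20*((N^2:ℕ):ℤ)) := by
      intro b hb
      rw [Finset.mem_image] at hb
      obtain ⟨b₀, hb₀, rfl⟩ := hb
      rw [Finset.mem_image] at hb₀
      obtain ⟨t, htS, rfl⟩ := hb₀
      obtain ⟨hA, hB, hC, hD', hdvd, hk0, hG0⟩ := hmem t htS
      obtain ⟨_, _, _, hW1, hW2, hG1, hG2⟩ := hkbound t htS
      have hGq : (q:ℤ) * (Gf t / (q:ℤ)) = Gf t := Int.mul_ediv_cancel' hdvd
      set m : ℤ := Gf t / (q:ℤ) with hm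
      have hm0 : m ≠ 0 := by
        intro h
        rw [h, mul_zero] at hGq
        exact hG0 hGq.symm
      have hmabs : (m.natAbs) * q ≤ 656*N^4 := by
        have h1 : (m.natAbs : ℤ) * q ≤ 656*((N^4:ℕ):ℤ) := by
          rcases le_or_gt 0 m with h | h
          · have : (m.natAbs : ℤ) = m := Int.natAbs_of_nonneg h
            rw [this]
            rw [← hcastN4]
            nlinarith [hG2, hGq]
          · have : (m.natAbs : ℤ) = -m := by omega
            rw [this]
            rw [← hcastN4]
            nlinarith [hG1, hGq]
        exact_mod_cast h1
      have hmM : m.natAbs ≤ M := hMprop _ hmabs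
      rw [Finset.mem_product]
      constructor
      · simp only [hg₂, hf₂, Finset.mem_erase, Finset.mem_Icc]
        have hmM' : (m.natAbs : ℤ) ≤ (M:ℤ) := by exact_mod_cast hmM
        have habs : |m| = (m.natAbs : ℤ) := Int.abs_eq_natAbs m
        refine ⟨hm0, by linarith [neg_abs_le m], by linarith [le_abs_self m]⟩
      · simp only [hg₂, hf₂, Finset.mem_Icc]
        rw [← hcastN2]
        exact ⟨hW1, hW2⟩
    have hcard1 : ((Finset.Icc (-(M:ℤ)) M).erase 0).card = 2*M := by
      rw [Finset.card_erase_of_mem (by rw [Finset.mem_Icc]; omega), Int.card_Icc]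
      omega
    have hcard2 : (Finset.Icc (-(20*((N^2:ℕ):ℤ))) (20*((N^2:ℕ):ℤ))).card = 40*N^2+1 := by
      rw [Int.card_Icc]
      omega
    calc ((S₂.image f₂).image g₂).card
        ≤ (((Finset.Icc (-(M:ℤ)) M).erase 0) ×ˢ
            Finset.Icc (-(20*((N^2:ℕ):ℤ))) (20*((N^2:ℕ):ℤ))).card :=
          Finset.card_le_card hsub
      _ = (2*M) * (40*N^2+1) := by rw [Finset.card_product, hcard1, hcard2]
  calc S₂.card ≤ (2*D) * (S₂.image f₂).card := stage1
    _ ≤ (2*D) * ((2*D) * ((S₂.image f₂).image g₂).card) := Nat.mul_le_mul_left _ stage2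
    _ ≤ (2*D) * ((2*D) * ((2*M) * (40*N^2+1))) := by
        exact Nat.mul_le_mul_left _ (Nat.mul_le_mul_left _ stage3)

set_option maxHeartbeats 2000000 in
theorem stmt14 :
    ∀ ε : ℝ, 0 < ε → ∃ C : ℝ, 0 < C ∧
      ∀ q : ℕ, q.Prime → Odd q →
      ∀ N : ℕ, 1 ≤ N → (N : ℝ) ≤ (q : ℝ) ^ ((1 : ℝ)/2) →
        (EqN q N : ℝ) ≤
          C * ((N : ℝ) ^ 6 * (q : ℝ) ^ (-(1 : ℝ) + ε) + (N : ℝ) ^ 2 * (q : ℝ) ^ ε) := by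
  intro ε hε
  have hδ : 0 < ε/4 := by positivity
  obtain ⟨C₀, hC₀1, hC₀⟩ := divisor_bound (ε/4) hδ
  set K : ℝ := C₀ * (1056:ℝ) ^ (ε/4) with hKdef
  have h1056 : (1:ℝ) ≤ (1056:ℝ) ^ (ε/4) := by
    rw [show (1:ℝ) = (1056:ℝ) ^ (0:ℝ) by rw [Real.rpow_zero]]
    exact Real.rpow_le_rpow_of_exponent_le (by norm_num) hδ.le
  have hK1 : 1 ≤ K := by
    calc (1:ℝ) = 1 * 1 := by ring
    _ ≤ C₀ * (1056:ℝ) ^ (ε/4) := by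
        apply mul_le_mul hC₀1 h1056 (by norm_num) (by linarith)
  refine ⟨80 + 160*K + 1721344*K^2, by positivity, ?_⟩
  intro q hq hodd N hN hNq
  haveI : Fact q.Prime := ⟨hq⟩
  haveI : NeZero q := ⟨hq.ne_zero⟩
  set n : ℝ := (N:ℝ) with hn
  set Q : ℝ := (q:ℝ) with hQ
  have hn1 : 1 ≤ n := by rw [hn]; exact_mod_cast hN
  have hQ1 : 1 ≤ Q := by rw [hQ]; exact_mod_cast hq.one_lt.le
  have hQ0 : (0:ℝ) < Q := by linarith
  -- N² ≤ q
  have hN2R : n^2 ≤ Q := by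
    have h2 : (0:ℝ) ≤ n := by linarith
    have : n^2 ≤ (Q ^ ((1:ℝ)/2))^2 := by
      apply pow_le_pow_left₀ h2 hNq
    calc n^2 ≤ (Q ^ ((1:ℝ)/2))^2 := this
      _ = Q := by
          rw [← Real.rpow_natCast (Q ^ ((1:ℝ)/2)) 2, ← Real.rpow_mul hQ0.le]
          norm_num
  have hN2 : N^2 ≤ q := by
    rw [hn, hQ] at hN2R
    exact_mod_cast hN2R
  -- choose D
  set D : ℕ := ⌊C₀ * ((1056*N^4 : ℕ):ℝ) ^ (ε/4)⌋₊ with hDdef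
  have hDnat : ∀ m : ℕ, m ≠ 0 → m ≤ 1056*N^4 → m.divisors.card ≤ D := by
    intro m hm0 hmle
    apply Nat.le_floor
    calc ((m.divisors.card : ℝ)) ≤ C₀ * (m:ℝ) ^ (ε/4) := hC₀ m hm0
      _ ≤ C₀ * ((1056*N^4 : ℕ):ℝ) ^ (ε/4) := by
          apply mul_le_mul_of_nonneg_left _ (by linarith)
          apply Real.rpow_le_rpow (by positivity) (by exact_mod_cast hmle) hδ.le
  have hDR : (D:ℝ) ≤ K * Q ^ (ε/2) := by
    have h1 : (D:ℝ) ≤ C₀ * ((1056*N^4 : ℕ):ℝ) ^ (ε/4) :=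
      Nat.floor_le (by positivity)
    have h2 : ((1056*N^4 : ℕ):ℝ) ≤ 1056 * Q^2 := by
      push_cast
      have : n^4 ≤ Q^2 := by nlinarith
      nlinarith
    have h3 : ((1056*N^4 : ℕ):ℝ) ^ (ε/4) ≤ (1056 * Q^2) ^ (ε/4) :=
      Real.rpow_le_rpow (by positivity) h2 hδ.le
    have h4 : ((1056:ℝ) * Q^2) ^ (ε/4) = (1056:ℝ)^(ε/4) * Q^(ε/2) := by
      rw [Real.mul_rpow (by norm_num) (by positivity)]
      congr 1
      rw [← Real.rpow_natCast Q 2, ← Real.rpow_mul hQ0.le,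
        show ((2:ℕ):ℝ) * (ε/4) = ε/2 by push_cast; ring]
    calc (D:ℝ) ≤ C₀ * ((1056*N^4 : ℕ):ℝ) ^ (ε/4) := h1
      _ ≤ C₀ * ((1056 * Q^2) ^ (ε/4)) := by
          apply mul_le_mul_of_nonneg_left h3 (by linarith)
      _ = K * Q^(ε/2) := by rw [h4, hKdef]; ring
  -- nat master bound
  have hsplit : (TT q N).card ≤
      ((TT q N).filter (fun t => kf t = 0)).card
      + (((TT q N).filter (fun t => kf t ≠ 0 ∧ Gf t = 0)).card
      + ((TT q N).filter (fun t => kf t ≠ 0 ∧ Gf t ≠ 0)).card) := by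
    classical
    have hsub : TT q N ⊆ ((TT q N).filter (fun t => kf t = 0)) ∪
        (((TT q N).filter (fun t => kf t ≠ 0 ∧ Gf t = 0)) ∪
        ((TT q N).filter (fun t => kf t ≠ 0 ∧ Gf t ≠ 0))) := by
      intro t ht
      simp only [Finset.mem_union, Finset.mem_filter]
      by_cases h1 : kf t = 0
      · exact Or.inl ⟨ht, h1⟩
      · by_cases h2 : Gf t = 0
        · exact Or.inr (Or.inl ⟨ht, h1, h2⟩)
        · exact Or.inr (Or.inr ⟨ht, h1, h2⟩)
    calc (TT q N).card ≤ _ := Finset.card_le_card hsub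
      _ ≤ _ := Finset.card_union_le _ _
      _ ≤ _ := by
          apply Nat.add_le_add_left
          exact Finset.card_union_le _ _
  have masterNat : EqN q N ≤ 8 * (10*N^2 + (4*((D*N)*(4*N+1))
      + (2*D) * ((2*D) * ((2*(656*N^4/q))*(40*N^2+1))))) := by
    calc EqN q N ≤ 8 * (TT q N).card := stepA q N hq hodd hN
      _ ≤ _ := by
          apply Nat.mul_le_mul_left 8
          calc (TT q N).card ≤ _ := hsplit
            _ ≤ _ := by
                apply Nat.add_le_add (stepB0 q N hq hodd hN2)
                exact Nat.add_le_add (stepB1 q N D hN hDnat) (stepB2 q N D hq hN hDnat)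
  -- to the reals
  have masterR : (EqN q N : ℝ) ≤ 8 * (10*n^2 + (4*(((D:ℝ)*n)*(4*n+1))
      + (2*(D:ℝ)) * ((2*(D:ℝ)) * ((2*((656*N^4/q : ℕ):ℝ))*(40*n^2+1))))) := by
    have := masterNat
    have hcast : ((8 * (10*N^2 + (4*((D*N)*(4*N+1))
        + (2*D) * ((2*D) * ((2*(656*N^4/q))*(40*N^2+1))))) : ℕ) : ℝ)
        = 8 * (10*n^2 + (4*(((D:ℝ)*n)*(4*n+1))
        + (2*(D:ℝ)) * ((2*(D:ℝ)) * ((2*((656*N^4/q : ℕ):ℝ))*(40*n^2+1))))) := by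
      push_cast
      ring
    rw [← hcast]
    exact_mod_cast this
  -- real-side bounds
  have hqe : (1:ℝ) ≤ Q^ε := by
    rw [show (1:ℝ) = Q ^ (0:ℝ) by rw [Real.rpow_zero]]
    exact Real.rpow_le_rpow_of_exponent_le hQ1 hε.le
  have hD0 : (0:ℝ) ≤ (D:ℝ) := by positivity
  have hMc : ((656*N^4/q : ℕ):ℝ) ≤ 656*n^4/Q := by
    calc ((656*N^4/q : ℕ):ℝ) ≤ ((656*N^4 : ℕ):ℝ)/Q := Nat.cast_div_le
      _ = 656*n^4/Q := by push_cast; ring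
  have hD2 : (D:ℝ)^2 ≤ K^2 * Q^ε := by
    have h1 : (D:ℝ)^2 ≤ (K * Q^(ε/2))^2 := by
      apply pow_le_pow_left₀ hD0 hDR
    calc (D:ℝ)^2 ≤ (K * Q^(ε/2))^2 := h1
      _ = K^2 * (Q^(ε/2) * Q^(ε/2)) := by ring
      _ = K^2 * Q^ε := by rw [← Real.rpow_add hQ0]; norm_num
  have hQhalf : Q^(ε/2) ≤ Q^ε := Real.rpow_le_rpow_of_exponent_le hQ1 (by linarith)
  have hQm1 : Q^(-(1:ℝ) + ε) = Q^ε / Q := by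
    rw [Real.rpow_add hQ0, Real.rpow_neg_one]
    ring
  -- piece bounds
  have hp1 : 8 * (10*n^2) ≤ 80 * (n^2 * Q^ε) := by nlinarith [sq_nonneg n]
  have hp2 : 8 * (4*(((D:ℝ)*n)*(4*n+1))) ≤ 160 * K * (n^2 * Q^ε) := by
    have h41 : (4*n+1) ≤ 5*n := by linarith
    have hDe : (D:ℝ) ≤ K * Q^ε := le_trans hDR (by
      apply mul_le_mul_of_nonneg_left hQhalf (by linarith))
    have hKQ : (0:ℝ) ≤ K * Q^ε := by positivity
    calc 8 * (4*(((D:ℝ)*n)*(4*n+1))) = 32 * (D:ℝ) * n * (4*n+1) := by ring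
      _ ≤ 32 * (D:ℝ) * n * (5*n) := by
          apply mul_le_mul_of_nonneg_left h41
          positivity
      _ = 160 * (D:ℝ) * n^2 := by ring
      _ ≤ 160 * (K * Q^ε) * n^2 := by
          have := mul_le_mul_of_nonneg_right hDe (by positivity : (0:ℝ) ≤ n^2)
          nlinarith
      _ = 160 * K * (n^2 * Q^ε) := by ring
  have hp3 : 8 * ((2*(D:ℝ)) * ((2*(D:ℝ)) * ((2*((656*N^4/q : ℕ):ℝ))*(40*n^2+1))))
      ≤ 1721344 * K^2 * (n^6 * Q^(-(1:ℝ) + ε)) := by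
    have h41 : (40*n^2+1) ≤ 41*n^2 := by nlinarith
    have hMc0 : (0:ℝ) ≤ ((656*N^4/q : ℕ):ℝ) := by positivity
    calc 8 * ((2*(D:ℝ)) * ((2*(D:ℝ)) * ((2*((656*N^4/q : ℕ):ℝ))*(40*n^2+1))))
        = 64 * (D:ℝ)^2 * (((656*N^4/q : ℕ):ℝ)) * (40*n^2+1) := by ring
      _ ≤ 64 * (D:ℝ)^2 * (656*n^4/Q) * (40*n^2+1) := by
          apply mul_le_mul_of_nonneg_right _ (by nlinarith)
          apply mul_le_mul_of_nonneg_left hMc (by positivity)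
      _ ≤ 64 * (D:ℝ)^2 * (656*n^4/Q) * (41*n^2) := by
          apply mul_le_mul_of_nonneg_left h41 (by positivity)
      _ = 64 * 656 * 41 * (D:ℝ)^2 * (n^6 / Q) := by ring
      _ ≤ 64 * 656 * 41 * (K^2 * Q^ε) * (n^6 / Q) := by
          apply mul_le_mul_of_nonneg_right _ (by positivity)
          apply mul_le_mul_of_nonneg_left hD2 (by norm_num)
      _ = 1721344 * K^2 * (n^6 * (Q^ε / Q)) := by ring
      _ = 1721344 * K^2 * (n^6 * Q^(-(1:ℝ) + ε)) := by rw [hQm1]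
  -- combine
  have hA0 : (0:ℝ) ≤ n^6 * Q^(-(1:ℝ)+ε) := by positivity
  have hB0 : (0:ℝ) ≤ n^2 * Q^ε := by positivity
  calc (EqN q N : ℝ) ≤ _ := masterR
    _ = 8 * (10*n^2) + 8 * (4*(((D:ℝ)*n)*(4*n+1)))
        + 8 * ((2*(D:ℝ)) * ((2*(D:ℝ)) * ((2*((656*N^4/q : ℕ):ℝ))*(40*n^2+1)))) := by
        ring
    _ ≤ 80 * (n^2 * Q^ε) + 160 * K * (n^2 * Q^ε)
        + 1721344 * K^2 * (n^6 * Q^(-(1:ℝ) + ε)) := by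
        exact add_le_add (add_le_add hp1 hp2) hp3
    _ ≤ (80 + 160*K + 1721344*K^2) * (n^6 * Q^(-(1:ℝ) + ε) + n^2 * Q^ε) := by
        nlinarith [hA0, hB0, hK1, sq_nonneg K]
end
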